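/- arXiv:1706.04545 — 7 statements merged into one kernel-verified Lean document; each statement's English description precedes it below -/
import Mathlib

section
/- Let X, Y, Z be topological spaces with Y Hausdorff. Let Γ₁ ⊆ X × Y be a closed subset such that the restriction to Γ₁ of the first projection X × Y → X is a proper map with finite fibers and is surjective onto X, and let Γ₂ ⊆ Y × Z be a closed subset such that the restriction to Γ₂ of the first projection Y × Z → Y is a proper map with finite fibers and is surjective onto Y. Then the composed correspondence Γ₂ ∘ Γ₁ := { (x,z) ∈ X × Z : ∃ y ∈ Y, (x,y) ∈ Γ₁ and (y,z) ∈ Γ₂ } is a closed subset of X × Z, and the restriction to Γ₂ ∘ Γ₁ of the first projection X × Z → X is a proper map with finite fibers and is surjective onto X. -/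
/-- A subset `Γ` of a product `A × B` is *finite and surjective over `A`* if the restriction
to `Γ` of the first projection `A × B → A` is a proper map, has finite fibers, and is
surjective onto `A`. -/
def FiniteSurjectiveOver {A B : Type*} [TopologicalSpace A] [TopologicalSpace B]
    (Γ : Set (A × B)) : Prop :=
  IsProperMap (fun p : Γ => (p : A × B).1) ∧
  (∀ a : A, {p : Γ | (p : A × B).1 = a}.Finite) ∧
  Function.Surjective (fun p : Γ => (p : A × B).1)

/-- The composed correspondence `Γ₂ ∘ Γ₁` of `Γ₁ ⊆ X × Y` and `Γ₂ ⊆ Y × Z`. -/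
def corComp {X Y Z : Type*} (Γ₁ : Set (X × Y)) (Γ₂ : Set (Y × Z)) : Set (X × Z) :=
  {q : X × Z | ∃ y : Y, (q.1, y) ∈ Γ₁ ∧ (y, q.2) ∈ Γ₂}

/-- Composition of finite surjective topological correspondences is closed and finite
surjective, provided the middle space is Hausdorff. -/
theorem stmt0 {X Y Z : Type*} [TopologicalSpace X] [TopologicalSpace Y] [TopologicalSpace Z]
    [T2Space Y] (Γ₁ : Set (X × Y)) (Γ₂ : Set (Y × Z))
    (h₁c : IsClosed Γ₁) (h₁ : FiniteSurjectiveOver Γ₁)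
    (h₂c : IsClosed Γ₂) (h₂ : FiniteSurjectiveOver Γ₂) :
    IsClosed (corComp Γ₁ Γ₂) ∧ FiniteSurjectiveOver (corComp Γ₁ Γ₂) := by
  obtain ⟨h₁p, h₁f, h₁s⟩ := h₁
  obtain ⟨h₂p, h₂f, h₂s⟩ := h₂
  -- `T` : fiber product inside `Γ₁ × Z`
  set T : Set (Γ₁ × Z) := {p | ((p.1 : X × Y).2, p.2) ∈ Γ₂} with hTdef
  have hTc : IsClosed T := h₂c.preimage (by fun_prop)
  -- the proper map `T → X × Z`
  have hφ : IsProperMap ((Prod.map (fun g : Γ₁ => (g : X × Y).1) (id : Z → Z)) ∘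
      (Subtype.val : T → Γ₁ × Z)) :=
    (h₁p.prodMap isProperMap_id).comp hTc.isProperMap_subtypeVal
  have hrange : Set.range ((Prod.map (fun g : Γ₁ => (g : X × Y).1) (id : Z → Z)) ∘
      (Subtype.val : T → Γ₁ × Z)) = corComp Γ₁ Γ₂ := by
    ext ⟨x, z⟩
    constructor
    · rintro ⟨⟨⟨g, z'⟩, hgz⟩, h⟩
      simp only [Function.comp_apply, Prod.map_apply, id_eq, Prod.mk.injEq] at h
      exact ⟨(g : X × Y).2, by rw [← h.1]; exact ⟨g.2, by rwa [h.2] at hgz⟩⟩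
    · rintro ⟨y, hy1, hy2⟩
      exact ⟨⟨(⟨(x, y), hy1⟩, z), hy2⟩, rfl⟩
  have hclosed : IsClosed (corComp Γ₁ Γ₂) := hrange ▸ hφ.isClosed_range
  refine ⟨hclosed, ?_, ?_, ?_⟩
  · -- properness of `corComp → X`
    rw [isProperMap_iff_isClosedMap_and_compact_fibers]
    refine ⟨by fun_prop, ?_, ?_⟩
    · -- closed map
      intro C hC
      rw [isClosed_induced_iff] at hC
      obtain ⟨D, hD, rfl⟩ := hC
      have hψ : IsProperMap (Prod.map (id : X → X) (fun g : Γ₂ => (g : Y × Z).1)) :=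
        isProperMap_id.prodMap h₂p
      have hF : IsClosed {p : X × Γ₂ | (p.1, (p.2 : Y × Z).2) ∈ D} :=
        hD.preimage (by fun_prop)
      have hE'' : IsClosed ((Prod.map (id : X → X) (fun g : Γ₂ => (g : Y × Z).1)) ''
          {p : X × Γ₂ | (p.1, (p.2 : Y × Z).2) ∈ D}) :=
        hψ.isClosedMap _ hF
      have hE : IsClosed ((Subtype.val : Γ₁ → X × Y) ⁻¹'
          ((Prod.map (id : X → X) (fun g : Γ₂ => (g : Y × Z).1)) ''
          {p : X × Γ₂ | (p.1, (p.2 : Y × Z).2) ∈ D})) :=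
        hE''.preimage continuous_subtype_val
      have key : (fun p : corComp Γ₁ Γ₂ => (p : X × Z).1) ''
          ((Subtype.val : corComp Γ₁ Γ₂ → X × Z) ⁻¹' D) =
          (fun g : Γ₁ => (g : X × Y).1) '' ((Subtype.val : Γ₁ → X × Y) ⁻¹'
          ((Prod.map (id : X → X) (fun g : Γ₂ => (g : Y × Z).1)) ''
          {p : X × Γ₂ | (p.1, (p.2 : Y × Z).2) ∈ D})) := by
        ext x
        constructor
        · rintro ⟨⟨⟨x', z⟩, y, hy1, hy2⟩, hq, rfl⟩
          exact ⟨⟨(x', y), hy1⟩, ⟨(x', ⟨(y, z), hy2⟩), hq, rfl⟩, rfl⟩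
        · rintro ⟨⟨⟨x', y⟩, hg⟩, ⟨⟨x'', g₂⟩, hmem, heq⟩, rfl⟩
          simp only [Prod.map_apply, id_eq, Prod.mk.injEq] at heq
          refine ⟨⟨(x', (g₂ : Y × Z).2), ⟨y, hg, ?_⟩⟩, ?_, rfl⟩
          · rw [← heq.2]; exact g₂.2
          · show (x', (g₂ : Y × Z).2) ∈ D
            rw [← heq.1]; exact hmem
      rw [key]
      exact h₁p.isClosedMap _ hE
    · -- compact (indeed finite) fibers
      intro x
      have fib2 : ∀ y : Y, {z : Z | (y, z) ∈ Γ₂}.Finite := by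
        intro y
        apply ((h₂f y).image (fun p : Γ₂ => p.val.2)).subset
        intro z hz
        exact ⟨⟨(y, z), hz⟩, rfl, rfl⟩
      have hS : {q : X × Z | q ∈ corComp Γ₁ Γ₂ ∧ q.1 = x}.Finite := by
        apply (Set.Finite.biUnion (h₁f x)
          (fun g _ => ((fib2 (g : X × Y).2).image (fun z => (x, z))))).subset
        rintro ⟨x', z⟩ ⟨⟨y, hy1, hy2⟩, rfl⟩
        exact Set.mem_biUnion (show (⟨(x', y), hy1⟩ : Γ₁) ∈ {p : Γ₁ | (p : X × Y).1 = x'}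
          from rfl) ⟨z, hy2, rfl⟩
      apply Set.Finite.isCompact
      apply Set.Finite.of_finite_image (f := (Subtype.val : corComp Γ₁ Γ₂ → X × Z))
      · apply hS.subset
        rintro q ⟨⟨z, hz⟩, hq, rfl⟩
        exact ⟨hz, hq⟩
      · exact Subtype.val_injective.injOn
  · -- finite fibers (same as above)
    intro x
    have fib2 : ∀ y : Y, {z : Z | (y, z) ∈ Γ₂}.Finite := by
      intro y
      apply ((h₂f y).image (fun p : Γ₂ => p.val.2)).subset
      intro z hz
      exact ⟨⟨(y, z), hz⟩, rfl, rfl⟩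
    have hS : {q : X × Z | q ∈ corComp Γ₁ Γ₂ ∧ q.1 = x}.Finite := by
      apply (Set.Finite.biUnion (h₁f x)
        (fun g _ => ((fib2 (g : X × Y).2).image (fun z => (x, z))))).subset
      rintro ⟨x', z⟩ ⟨⟨y, hy1, hy2⟩, rfl⟩
      exact Set.mem_biUnion (show (⟨(x', y), hy1⟩ : Γ₁) ∈ {p : Γ₁ | (p : X × Y).1 = x'}
        from rfl) ⟨z, hy2, rfl⟩
    apply Set.Finite.of_finite_image (f := (Subtype.val : corComp Γ₁ Γ₂ → X × Z))
    · apply hS.subset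
      rintro q ⟨⟨z, hz⟩, hq, rfl⟩
      exact ⟨hz, hq⟩
    · exact Subtype.val_injective.injOn
  · -- surjectivity
    intro x
    obtain ⟨g₁, hg₁⟩ := h₁s x
    obtain ⟨g₂, hg₂⟩ := h₂s (g₁ : X × Y).2
    refine ⟨⟨(x, (g₂ : Y × Z).2), (g₁ : X × Y).2, ?_, ?_⟩, rfl⟩
    · rw [← hg₁]; exact g₁.2
    · rw [← hg₂]; exact g₂.2
end

section
/- Let X, Y, Z be topological spaces with Y Hausdorff. Let Γ₁ ⊆ X × Y be a closed subset, and let Γ₂ ⊆ Y × Z be a closed subset such that the restriction to Γ₂ of the first projection Y × Z → Y is a proper map with finite fibers and is surjective onto Y. Then the fiber product Γ₁ ×_Y Γ₂ := { (x,y,z) ∈ X × Y × Z : (x,y) ∈ Γ₁ and (y,z) ∈ Γ₂ } is a closed subset of X × Y × Z, and the projection Γ₁ ×_Y Γ₂ → Γ₁, (x,y,z) ↦ (x,y), is a proper map with finite fibers and is surjective onto Γ₁. -/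
/-- The fiber product `Γ₁ ×_Y Γ₂ ⊆ X × Y × Z` of `Γ₁ ⊆ X × Y` and `Γ₂ ⊆ Y × Z`. -/
def fiberProd {X Y Z : Type*} (Γ₁ : Set (X × Y)) (Γ₂ : Set (Y × Z)) : Set (X × Y × Z) :=
  {t : X × Y × Z | (t.1, t.2.1) ∈ Γ₁ ∧ (t.2.1, t.2.2) ∈ Γ₂}

/-- The projection `Γ₁ ×_Y Γ₂ → Γ₁`, `(x,y,z) ↦ (x,y)`. -/
def fpProj {X Y Z : Type*} (Γ₁ : Set (X × Y)) (Γ₂ : Set (Y × Z))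
    (t : fiberProd Γ₁ Γ₂) : Γ₁ :=
  ⟨((t : X × Y × Z).1, (t : X × Y × Z).2.1), t.2.1⟩

open Filter Topology

theorem stmt1 {X Y Z : Type*} [TopologicalSpace X] [TopologicalSpace Y] [TopologicalSpace Z]
    [T2Space Y] (Γ₁ : Set (X × Y)) (Γ₂ : Set (Y × Z))
    (h₁c : IsClosed Γ₁) (h₂c : IsClosed Γ₂) (h₂ : FiniteSurjectiveOver Γ₂) :
    IsClosed (fiberProd Γ₁ Γ₂) ∧
    IsProperMap (fpProj Γ₁ Γ₂) ∧
    (∀ g : Γ₁, {t : fiberProd Γ₁ Γ₂ | fpProj Γ₁ Γ₂ t = g}.Finite) ∧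
    Function.Surjective (fpProj Γ₁ Γ₂) := by
  obtain ⟨h₂p, h₂f, h₂s⟩ := h₂
  refine ⟨?_, ?_, ?_, ?_⟩
  · have : fiberProd Γ₁ Γ₂ =
        (fun t : X × Y × Z => (t.1, t.2.1)) ⁻¹' Γ₁ ∩ (fun t : X × Y × Z => t.2) ⁻¹' Γ₂ := by
      ext ⟨x, y, z⟩; simp [fiberProd]
    rw [this]
    exact (h₁c.preimage (by fun_prop)).inter (h₂c.preimage (by fun_prop))
  · -- properness
    rw [isProperMap_iff_ultrafilter]
    constructor
    · apply Continuous.subtype_mk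
      exact ((continuous_fst.comp continuous_subtype_val).prodMk
        (continuous_fst.comp (continuous_snd.comp continuous_subtype_val)))
    · intro 𝒰 g hg
      obtain ⟨⟨x, y⟩, hxy⟩ := g
      -- the map to Γ₂
      set q : fiberProd Γ₁ Γ₂ → Γ₂ := fun t => ⟨((t : X × Y × Z).2.1, (t : X × Y × Z).2.2), t.2.2⟩
        with hq
      have hgval : Tendsto (fun t : fiberProd Γ₁ Γ₂ => ((fpProj Γ₁ Γ₂ t : X × Y))) 𝒰 (𝓝 (x, y)) :=
        (continuous_subtype_val.tendsto _).comp hg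
      have hy : Tendsto (fun t : fiberProd Γ₁ Γ₂ => (q t : Y × Z).1) 𝒰 (𝓝 y) := by
        have := (continuous_snd.tendsto _).comp hgval
        exact this
      have := isProperMap_iff_ultrafilter.mp h₂p
      obtain ⟨g₂, hg₂1, hg₂2⟩ := this.2 (𝒰 := 𝒰.map q) (by
        rwa [Ultrafilter.coe_map, tendsto_map'_iff])
      obtain ⟨⟨y', z⟩, hyz⟩ := g₂
      simp only at hg₂1
      subst hg₂1
      refine ⟨⟨(x, y', z), (show (x, y', z) ∈ fiberProd Γ₁ Γ₂ from ⟨hxy, hyz⟩)⟩, ?_, ?_⟩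
      · rfl
      · rw [nhds_subtype_eq_comap, ← map_le_iff_le_comap]
        have hx : Tendsto (fun t : fiberProd Γ₁ Γ₂ => (t : X × Y × Z).1) 𝒰 (𝓝 x) :=
          (continuous_fst.tendsto _).comp hgval
        have hqt : Tendsto q 𝒰 (𝓝 ⟨(y', z), hyz⟩) := by
          rwa [Ultrafilter.coe_map] at hg₂2
        have hz : Tendsto (fun t : fiberProd Γ₁ Γ₂ => (t : X × Y × Z).2.2) 𝒰 (𝓝 z) := by
          have := (continuous_snd.tendsto _).comp
            ((continuous_subtype_val.tendsto (⟨(y', z), hyz⟩ : Γ₂)).comp hqt)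
          exact this
        have : Tendsto (fun t : fiberProd Γ₁ Γ₂ => (t : X × Y × Z)) 𝒰 (𝓝 (x, y', z)) := by
          rw [nhds_prod_eq, nhds_prod_eq]
          exact hx.prodMk (hy.prodMk hz)
        exact this
  · -- finite fibers
    rintro ⟨⟨x, y⟩, hxy⟩
    have hfin := h₂f y
    apply Set.Finite.of_finite_image (f := fun t : fiberProd Γ₁ Γ₂ =>
      (⟨((t : X × Y × Z).2.1, (t : X × Y × Z).2.2), t.2.2⟩ : Γ₂))
    · apply hfin.subset
      rintro p ⟨t, ht, rfl⟩
      have : (t : X × Y × Z).2.1 = y := congrArg (fun g : Γ₁ => (g : X × Y).2) ht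
      simpa using this
    · rintro ⟨⟨a, b, c⟩, hab⟩ h1 ⟨⟨a', b', c'⟩, hab'⟩ h2 heq
      simp only [Set.mem_setOf_eq, fpProj, Subtype.mk.injEq, Prod.mk.injEq] at h1 h2 heq
      exact Subtype.ext (by simp [h1.1, h1.2, h2.1, h2.2, heq])
  · -- surjectivity
    rintro ⟨⟨x, y⟩, hxy⟩
    obtain ⟨⟨⟨y', z⟩, hyz⟩, hp⟩ := h₂s y
    simp only at hp
    subst hp
    exact ⟨⟨(x, y', z), hxy, hyz⟩, rfl⟩
end

section
/- Let S, X, Y, Z be topological spaces together with continuous maps h_X : X → S, h_Y : Y → S, h_Z : Z → S, and assume Y is Hausdorff. Write X ×_S Y = { (x,y) ∈ X × Y : h_X(x) = h_Y(y) } with the subspace topology, and similarly Y ×_S Z and X ×_S Z. Let Γ₁ ⊆ X ×_S Y be closed in X ×_S Y and finite and surjective over X, and let Γ₂ ⊆ Y ×_S Z be closed in Y ×_S Z and finite and surjective over Y. Then Γ₂ ∘ Γ₁ := { (x,z) : ∃ y ∈ Y, (x,y) ∈ Γ₁ and (y,z) ∈ Γ₂ } is contained in X ×_S Z, is closed in X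 ×_S Z, and is finite and surjective over X. -/
open Filter Topology Set



/-- If the first projection restricted to `Γ ⊆ A × B` is proper, and an ultrafilter on
`A × B` containing `Γ` has first coordinate converging to `a`, then there is `b` with
`(a,b) ∈ Γ` and second coordinate converging to `b`. -/
lemma prop_ultra' {A B : Type*} [TopologicalSpace A] [TopologicalSpace B] {Γ : Set (A × B)}
    (h : IsProperMap (fun p : Γ => (p : A × B).1)) (𝒱 : Ultrafilter (A × B)) (hΓ : Γ ∈ 𝒱)
    {a : A} (ha : Tendsto Prod.fst (𝒱 : Filter (A × B)) (𝓝 a)) :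
    ∃ b : B, (a, b) ∈ Γ ∧ Tendsto Prod.snd (𝒱 : Filter (A × B)) (𝓝 b) := by
  have hrange : Set.range (Subtype.val : Γ → A × B) ∈ 𝒱 := by
    rwa [Subtype.range_coe]
  set 𝒱' : Ultrafilter Γ := 𝒱.comap Subtype.val_injective hrange with h𝒱'
  have hmap : Filter.map Subtype.val (𝒱' : Filter Γ) = ↑𝒱 := by
    rw [h𝒱', Ultrafilter.coe_comap, Filter.map_comap_of_mem hrange]
  have htend : Tendsto (fun p : Γ => (p : A × B).1) (𝒱' : Filter Γ) (𝓝 a) := by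
    have h1 : Tendsto Prod.fst (Filter.map Subtype.val (𝒱' : Filter Γ)) (𝓝 a) := by rw [hmap]; exact ha
    rwa [Filter.tendsto_map'_iff] at h1
  obtain ⟨p, hp1, hp2⟩ := h.ultrafilter_le_nhds_of_tendsto htend
  have hle : (𝒱 : Filter (A × B)) ≤ 𝓝 (p : A × B) := by
    rw [← hmap]
    exact (continuous_subtype_val.tendsto p).mono_left hp2
  refine ⟨(p : A × B).2, ?_, (continuous_snd.tendsto _).mono_left hle⟩
  have hpmem := p.2
  rwa [show ((a, (p : A × B).2) : A × B) = (p : A × B) by rw [← hp1]] 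

/-- If `Γ ⊆ A ×_S B` is closed in `A ×_S B` and an ultrafilter containing `Γ` converges to a
point of `A ×_S B`, then that point belongs to `Γ`. -/
lemma closed_mem' {S A B : Type*} [TopologicalSpace A] [TopologicalSpace B]
    {f : A → S} {g : B → S} {Γ : Set (A × B)}
    (hsub : Γ ⊆ {p : A × B | f p.1 = g p.2})
    (hc : IsClosed (Subtype.val ⁻¹' Γ : Set {p : A × B // f p.1 = g p.2}))
    (𝒲 : Ultrafilter (A × B)) (hΓ : Γ ∈ 𝒲) {a : A} {b : B} (hfg : f a = g b)
    (hle : (𝒲 : Filter (A × B)) ≤ 𝓝 (a, b)) : (a, b) ∈ Γ := by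
  have hrange : Set.range (Subtype.val : {p : A × B // f p.1 = g p.2} → A × B) ∈ 𝒲 := by
    rw [Subtype.range_val_subtype]
    exact Filter.mem_of_superset hΓ hsub
  set 𝒲' := 𝒲.comap Subtype.val_injective hrange with h𝒲'
  have hmem : Subtype.val ⁻¹' Γ ∈ 𝒲' := by
    rw [h𝒲', Ultrafilter.mem_comap]
    exact Filter.mem_of_superset hΓ (fun p hp => ⟨⟨p, hsub hp⟩, hp, rfl⟩)
  have hle' : (𝒲' : Filter _) ≤ 𝓝 (⟨(a, b), hfg⟩ : {p : A × B // f p.1 = g p.2}) := by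
    rw [h𝒲', Ultrafilter.coe_comap, nhds_subtype_eq_comap]
    exact Filter.comap_mono hle
  have := mem_closure_iff_ultrafilter.mpr ⟨𝒲', hmem, hle'⟩
  rwa [hc.closure_eq] at this

lemma key' {S X Y Z : Type*} [TopologicalSpace S] [TopologicalSpace X]
    [TopologicalSpace Y] [TopologicalSpace Z]
    {hY : Y → S} {hZ : Z → S}
    {Γ₁ : Set (X × Y)} {Γ₂ : Set (Y × Z)}
    (h₂sub : Γ₂ ⊆ {p : Y × Z | hY p.1 = hZ p.2})
    (h₂c : IsClosed (Subtype.val ⁻¹' Γ₂ : Set {p : Y × Z // hY p.1 = hZ p.2}))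
    (h₁p : IsProperMap (fun p : Γ₁ => (p : X × Y).1))
    (h₂p : IsProperMap (fun p : Γ₂ => (p : Y × Z).1))
    (𝒰 : Ultrafilter (X × Z)) (hm : corComp Γ₁ Γ₂ ∈ 𝒰) {x : X}
    (hx : Tendsto Prod.fst (𝒰 : Filter (X × Z)) (𝓝 x)) :
    ∃ y z, (x, y) ∈ Γ₁ ∧ (y, z) ∈ Γ₂ ∧ Tendsto Prod.snd (𝒰 : Filter (X × Z)) (𝓝 z) ∧
      ∀ z', hY y = hZ z' → Tendsto Prod.snd (𝒰 : Filter (X × Z)) (𝓝 z') → (y, z') ∈ Γ₂ := by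
  obtain ⟨q, yq, hq⟩ := Ultrafilter.nonempty_of_mem hm
  haveI : Nonempty Y := ⟨yq⟩
  classical
  set ch : X × Z → Y := fun q =>
    if h : q ∈ corComp Γ₁ Γ₂ then h.choose else Classical.arbitrary Y with hch
  have hchspec : ∀ q ∈ corComp Γ₁ Γ₂, (q.1, ch q) ∈ Γ₁ ∧ (ch q, q.2) ∈ Γ₂ := by
    intro q hq
    rw [hch]
    simp only [dif_pos hq]
    exact hq.choose_spec
  -- ultrafilter on X × Y
  set 𝒱 : Ultrafilter (X × Y) := 𝒰.map (fun q => (q.1, ch q)) with h𝒱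
  have hΓ₁𝒱 : Γ₁ ∈ 𝒱 := by
    rw [h𝒱, Ultrafilter.mem_map]
    exact Filter.mem_of_superset hm (fun q hq => (hchspec q hq).1)
  have hfst𝒱 : Tendsto Prod.fst (𝒱 : Filter (X × Y)) (𝓝 x) := by
    rw [h𝒱, Ultrafilter.coe_map, Filter.tendsto_map'_iff]
    exact hx
  obtain ⟨y, hyΓ₁, hy⟩ := prop_ultra' h₁p 𝒱 hΓ₁𝒱 hfst𝒱
  have hchy : Tendsto ch (𝒰 : Filter (X × Z)) (𝓝 y) := by
    rwa [h𝒱, Ultrafilter.coe_map, Filter.tendsto_map'_iff] at hy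
  -- ultrafilter on Y × Z
  set 𝒲 : Ultrafilter (Y × Z) := 𝒰.map (fun q => (ch q, q.2)) with h𝒲
  have hΓ₂𝒲 : Γ₂ ∈ 𝒲 := by
    rw [h𝒲, Ultrafilter.mem_map]
    exact Filter.mem_of_superset hm (fun q hq => (hchspec q hq).2)
  have hfst𝒲 : Tendsto Prod.fst (𝒲 : Filter (Y × Z)) (𝓝 y) := by
    rw [h𝒲, Ultrafilter.coe_map, Filter.tendsto_map'_iff]
    exact hchy
  obtain ⟨z, hzΓ₂, hz⟩ := prop_ultra' h₂p 𝒲 hΓ₂𝒲 hfst𝒲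
  have hsnd : Tendsto Prod.snd (𝒰 : Filter (X × Z)) (𝓝 z) := by
    rwa [h𝒲, Ultrafilter.coe_map, Filter.tendsto_map'_iff] at hz
  refine ⟨y, z, hyΓ₁, hzΓ₂, hsnd, fun z' hyz' hsnd' => ?_⟩
  refine closed_mem' h₂sub h₂c 𝒲 hΓ₂𝒲 hyz' ?_
  rw [h𝒲, Ultrafilter.coe_map]
  have : Tendsto (fun q : X × Z => (ch q, q.2)) (𝒰 : Filter (X × Z)) (𝓝 (y, z')) :=
    hchy.prodMk_nhds hsnd'
  exact this

/-- Relative composition law: for spaces `X, Y, Z` over `S` with `Y` Hausdorff, the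
composition of a finite surjective correspondence `Γ₁`, closed in `X ×_S Y`, with a finite
surjective correspondence `Γ₂`, closed in `Y ×_S Z`, is contained and closed in `X ×_S Z`
and is finite and surjective over `X`. -/
theorem stmt3 {S X Y Z : Type*} [TopologicalSpace S] [TopologicalSpace X]
    [TopologicalSpace Y] [TopologicalSpace Z] [T2Space Y]
    (hX : X → S) (hY : Y → S) (hZ : Z → S)
    (hXc : Continuous hX) (hYc : Continuous hY) (hZc : Continuous hZ)
    (Γ₁ : Set (X × Y)) (Γ₂ : Set (Y × Z))
    (h₁sub : Γ₁ ⊆ {p : X × Y | hX p.1 = hY p.2})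
    (h₂sub : Γ₂ ⊆ {p : Y × Z | hY p.1 = hZ p.2})
    (h₁c : IsClosed (Subtype.val ⁻¹' Γ₁ : Set {p : X × Y // hX p.1 = hY p.2}))
    (h₂c : IsClosed (Subtype.val ⁻¹' Γ₂ : Set {p : Y × Z // hY p.1 = hZ p.2}))
    (h₁ : FiniteSurjectiveOver Γ₁) (h₂ : FiniteSurjectiveOver Γ₂) :
    corComp Γ₁ Γ₂ ⊆ {q : X × Z | hX q.1 = hZ q.2} ∧
    IsClosed (Subtype.val ⁻¹' corComp Γ₁ Γ₂ : Set {q : X × Z // hX q.1 = hZ q.2}) ∧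
    FiniteSurjectiveOver (corComp Γ₁ Γ₂) := by
  obtain ⟨h₁p, h₁f, h₁s⟩ := h₁
  obtain ⟨h₂p, h₂f, h₂s⟩ := h₂
  have hsub : corComp Γ₁ Γ₂ ⊆ {q : X × Z | hX q.1 = hZ q.2} := by
    rintro q ⟨y, hy1, hy2⟩
    exact (h₁sub hy1).trans (h₂sub hy2)
  refine ⟨hsub, ?_, ?_, ?_, ?_⟩
  · -- closedness in X ×_S Z
    rw [isClosed_iff_ultrafilter]
    intro a u hu hmem
    set 𝒰 : Ultrafilter (X × Z) := u.map Subtype.val with h𝒰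
    have hm : corComp Γ₁ Γ₂ ∈ 𝒰 := by
      rw [h𝒰, Ultrafilter.mem_map]; exact hmem
    have hval : Tendsto Subtype.val (u : Filter _) (𝓝 (a : X × Z)) :=
      (continuous_subtype_val.tendsto a).mono_left hu
    have hfst : Tendsto Prod.fst (𝒰 : Filter (X × Z)) (𝓝 (a : X × Z).1) := by
      rw [h𝒰, Ultrafilter.coe_map, Filter.tendsto_map'_iff]
      exact (continuous_fst.tendsto _).comp hval
    have hsnd : Tendsto Prod.snd (𝒰 : Filter (X × Z)) (𝓝 (a : X × Z).2) := by
      rw [h𝒰, Ultrafilter.coe_map, Filter.tendsto_map'_iff]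
      exact (continuous_snd.tendsto _).comp hval
    obtain ⟨y, z, hyΓ₁, hzΓ₂, hz, hz'⟩ := key' h₂sub h₂c h₁p h₂p 𝒰 hm hfst
    have hYZ : hY y = hZ (a : X × Z).2 := by
      have e1 : hX (a : X × Z).1 = hY y := h₁sub hyΓ₁
      have e2 : hX (a : X × Z).1 = hZ (a : X × Z).2 := a.2
      rw [← e1, e2]
    exact ⟨y, hyΓ₁, hz' _ hYZ hsnd⟩
  · -- properness
    rw [isProperMap_iff_ultrafilter]
    refine ⟨continuous_subtype_val.fst, ?_⟩
    intro u x hx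
    set 𝒰 : Ultrafilter (X × Z) := u.map Subtype.val with h𝒰
    have hm : corComp Γ₁ Γ₂ ∈ 𝒰 := by
      rw [h𝒰, Ultrafilter.mem_map]
      exact Filter.univ_mem' (fun p => p.2)
    have hfst : Tendsto Prod.fst (𝒰 : Filter (X × Z)) (𝓝 x) := by
      rw [h𝒰, Ultrafilter.coe_map, Filter.tendsto_map'_iff]
      exact hx
    obtain ⟨y, z, hyΓ₁, hzΓ₂, hz, -⟩ := key' h₂sub h₂c h₁p h₂p 𝒰 hm hfst
    have hsnd : Tendsto (fun p : corComp Γ₁ Γ₂ => (p : X × Z).2) (u : Filter _) (𝓝 z) := by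
      have := hz
      rwa [h𝒰, Ultrafilter.coe_map, Filter.tendsto_map'_iff] at this
    refine ⟨⟨(x, z), y, hyΓ₁, hzΓ₂⟩, rfl, ?_⟩
    have hval : Tendsto (Subtype.val : corComp Γ₁ Γ₂ → X × Z) (u : Filter _) (𝓝 (x, z)) :=
      hx.prodMk_nhds hsnd
    exact (tendsto_subtype_rng (f := id)).mpr hval
  · -- finite fibers
    intro x
    have hF : ((fun p : Γ₁ => (p : X × Y).2) '' {p : Γ₁ | (p : X × Y).1 = x}).Finite :=
      (h₁f x).image _
    have hG : (⋃ y ∈ (fun p : Γ₁ => (p : X × Y).2) '' {p : Γ₁ | (p : X × Y).1 = x},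
        {z : Z | (y, z) ∈ Γ₂}).Finite := by
      refine hF.biUnion (fun y _ => ?_)
      refine Set.Finite.subset ((h₂f y).image (fun p : Γ₂ => (p : Y × Z).2)) ?_
      rintro z hz
      exact ⟨⟨(y, z), hz⟩, rfl, rfl⟩
    have hzfin : {z : Z | (x, z) ∈ corComp Γ₁ Γ₂}.Finite := by
      refine hG.subset ?_
      rintro z ⟨y, hy1, hy2⟩
      exact Set.mem_biUnion ⟨⟨(x, y), hy1⟩, rfl, rfl⟩ hy2
    refine Set.Finite.of_finite_image (f := fun p : corComp Γ₁ Γ₂ => (p : X × Z).2) ?_ ?_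
    · refine hzfin.subset ?_
      rintro z ⟨p, hp, rfl⟩
      show (x, (p : X × Z).2) ∈ corComp Γ₁ Γ₂
      rw [show ((x, (p : X × Z).2) : X × Z) = (p : X × Z) by rw [← hp]]
      exact p.2
    · rintro p hp q hq hpq
      exact Subtype.ext (Prod.ext (hp.trans hq.symm) hpq)
  · -- surjectivity
    intro x
    obtain ⟨p₁, hp₁⟩ := h₁s x
    obtain ⟨p₂, hp₂⟩ := h₂s (p₁ : X × Y).2
    refine ⟨⟨(x, (p₂ : Y × Z).2), (p₁ : X × Y).2, ?_, ?_⟩, rfl⟩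
    · have := p₁.2
      rwa [show ((x, (p₁ : X × Y).2) : X × Y) = (p₁ : X × Y) by rw [← hp₁]]
    · have := p₂.2
      rwa [show (((p₁ : X × Y).2, (p₂ : Y × Z).2) : Y × Z) = (p₂ : Y × Z) by rw [← hp₂]]
end

section
/- Let E be a finite-dimensional real vector space and K a simplicial complex in E (in the sense of Mathlib's Geometry.SimplicialComplex) with countably many faces which is locally finite, meaning that every point of its underlying space |K| (the union of the convex hulls of its faces, with the subspace topology from E) has a neighborhood in |K| meeting only finitely many faces. Then there exists a sequence (U_n)_{n∈ℕ} of open subsets of |K| covering |K| such that for every nonempty finite subset I ⊆ ℕ, the intersection ⋂_{i∈I} U_i is either empty or a contractible topological space. -/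
open Set Finset Geometry Topology

namespace Stmt6Aux

variable {E : Type*} [NormedAddCommGroup E] [NormedSpace ℝ E]
variable {K : Geometry.SimplicialComplex ℝ E}

/-- If `z` has a convex representation over a face `t` with positive coefficient at `v`,
then `v` belongs to every face whose hull contains `z`. -/
lemma mem_of_coord_pos {t u : Finset E} (ht : t ∈ K.faces) (hu : u ∈ K.faces)
    {w : E → ℝ} (hw0 : ∀ y ∈ t, 0 ≤ w y) (hw1 : ∑ y ∈ t, w y = 1)
    {z : E} (hz : ∑ y ∈ t, w y • y = z)
    {v : E} (hv : v ∈ t) (hvpos : 0 < w v)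
    (hzu : z ∈ convexHull ℝ (u : Set E)) : v ∈ u := by
  classical
  have hzt : z ∈ convexHull ℝ (t : Set E) := Finset.mem_convexHull'.2 ⟨w, hw0, hw1, hz⟩
  have hinter : z ∈ convexHull ℝ ((t ∩ u : Finset E) : Set E) := by
    have := K.inter_subset_convexHull ht hu ⟨hzt, hzu⟩
    rwa [Finset.coe_inter]
  obtain ⟨w', hw'0, hw'1, hw'z⟩ := Finset.mem_convexHull'.1 hinter
  have ha : AffineIndependent ℝ ((↑) : t → E) := K.indep ht
  set s₁ : Finset {x // x ∈ t} := t.attach with hs₁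
  set s₂ : Finset {x // x ∈ t} := t.attach.filter (fun i => (i : E) ∈ t ∩ u) with hs₂
  have hsum₁ : ∑ i ∈ s₁, w (↑i) = 1 := by rw [hs₁, Finset.sum_attach]; exact hw1
  have hfilter : ∀ (g : E → ℝ), ∑ i ∈ s₂, g (↑i) = ∑ y ∈ t ∩ u, g y := by
    intro g
    rw [hs₂, Finset.sum_filter, Finset.sum_attach t (fun y => if y ∈ t ∩ u then g y else 0),
      ← Finset.sum_filter, Finset.filter_mem_eq_inter, ← Finset.inter_assoc, Finset.inter_self]
  have hsum₂ : ∑ i ∈ s₂, w' (↑i) = 1 := by rw [hfilter]; exact hw'1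
  have hcomb : s₁.affineCombination ℝ ((↑) : t → E) (fun i => w ↑i)
      = s₂.affineCombination ℝ ((↑) : t → E) (fun i => w' ↑i) := by
    rw [affineCombination_eq_centerMass hsum₁, affineCombination_eq_centerMass hsum₂,
      Finset.centerMass_eq_of_sum_1 _ _ hsum₁, Finset.centerMass_eq_of_sum_1 _ _ hsum₂]
    have e₁ : ∑ i ∈ s₁, w (↑i) • (i : E) = z := by
      rw [hs₁, Finset.sum_attach t (fun y => w y • y)]; exact hz
    have e₂ : ∑ i ∈ s₂, w' (↑i) • (i : E) = z := by
      rw [hs₂, Finset.sum_filter, Finset.sum_attach t (fun y => if y ∈ t ∩ u then w' y • y else 0),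
        ← Finset.sum_filter, Finset.filter_mem_eq_inter, ← Finset.inter_assoc, Finset.inter_self]
      exact hw'z
    rw [e₁, e₂]
  have hind := ha.indicator_eq_of_affineCombination_eq s₁ s₂ _ _ hsum₁ hsum₂ hcomb
  have hmem₁ : (⟨v, hv⟩ : {x // x ∈ t}) ∈ (↑s₁ : Set {x // x ∈ t}) := by
    simp [hs₁]
  have := congrFun hind ⟨v, hv⟩
  rw [Set.indicator_of_mem hmem₁] at this
  by_contra hvu
  have hnot : (⟨v, hv⟩ : {x // x ∈ t}) ∉ (↑s₂ : Set {x // x ∈ t}) := by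
    simp only [hs₂, Finset.coe_filter, Set.mem_setOf_eq, Finset.mem_attach, true_and,
      Finset.mem_inter, not_and]
    exact fun _ h => hvu h
  rw [Set.indicator_of_notMem hnot] at this
  exact absurd this (ne_of_gt hvpos)

/-- Every point of the space has a minimal face containing it. -/
lemma exists_support {x : E} (hx : x ∈ K.space) :
    ∃ s ∈ K.faces, x ∈ convexHull ℝ (s : Set E) ∧
      ∀ t ∈ K.faces, x ∈ convexHull ℝ (t : Set E) → s ⊆ t := by
  classical
  obtain ⟨t₀, ht₀, hxt₀⟩ := SimplicialComplex.mem_space_iff.1 hx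
  set N : Set ℕ := {n | ∃ s ∈ K.faces, x ∈ convexHull ℝ (s : Set E) ∧ s.card = n} with hN
  have hNne : N.Nonempty := ⟨t₀.card, t₀, ht₀, hxt₀, rfl⟩
  obtain ⟨s, hs, hxs, hcard⟩ := Nat.sInf_mem hNne
  refine ⟨s, hs, hxs, fun t ht hxt => ?_⟩
  have hst : x ∈ convexHull ℝ ((s ∩ t : Finset E) : Set E) := by
    have := K.inter_subset_convexHull hs ht ⟨hxs, hxt⟩
    rwa [Finset.coe_inter]
  have hne : (s ∩ t) ≠ ∅ := by
    intro h; rw [h] at hst; simp at hst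
  have hmem : (s ∩ t) ∈ K.faces := K.down_closed hs Finset.inter_subset_left (Finset.nonempty_iff_ne_empty.2 hne)
  have hle : s.card ≤ (s ∩ t).card := by
    rw [hcard]; exact Nat.sInf_le ⟨s ∩ t, hmem, hst, rfl⟩
  have heq : s ∩ t = s := Finset.eq_of_subset_of_card_le Finset.inter_subset_left hle
  intro y hy
  have : y ∈ s ∩ t := heq.symm ▸ hy
  exact (Finset.mem_inter.1 this).2

/-- The open star of `v` inside the space. -/
def star' (K : SimplicialComplex ℝ E) (v : E) : Set ↥K.space :=
  {x | ∀ t ∈ K.faces, (x : E) ∈ convexHull ℝ (t : Set E) → v ∈ t}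

lemma isOpen_star'
    (hlocfin : ∀ x : K.space, ∃ V : Set K.space, IsOpen V ∧ x ∈ V ∧
      {s ∈ K.faces | ∃ y ∈ V, (y : E) ∈ convexHull ℝ (s : Set E)}.Finite)
    (v : E) : IsOpen (star' K v) := by
  classical
  have hcl : IsClosed (⋃ t : {t : Finset E // t ∈ K.faces ∧ v ∉ t},
      ((↑) ⁻¹' (convexHull ℝ ((t : Finset E) : Set E)) : Set ↥K.space)) := by
    apply LocallyFinite.isClosed_iUnion
    · intro x
      obtain ⟨V, hV, hxV, hfin⟩ := hlocfin x
      refine ⟨V, hV.mem_nhds hxV, ?_⟩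
      refine (hfin.preimage ((Subtype.val_injective).injOn)).subset ?_
      rintro i ⟨z, hz1, hz2⟩
      exact ⟨i.2.1, z, hz2, hz1⟩
    · intro t
      exact ((t.1.finite_toSet.isCompact_convexHull ℝ).isClosed).preimage continuous_subtype_val
  have heq : star' K v = (⋃ t : {t : Finset E // t ∈ K.faces ∧ v ∉ t},
      ((↑) ⁻¹' (convexHull ℝ ((t : Finset E) : Set E)) : Set ↥K.space))ᶜ := by
    ext x
    simp only [star', Set.mem_setOf_eq, Set.mem_compl_iff, Set.mem_iUnion, Set.mem_preimage,
      Subtype.exists, not_exists]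
    constructor
    · rintro h t ⟨ht, hvt⟩ hxt
      exact hvt (h t ht hxt)
    · intro h t ht hxt
      by_contra hvt
      exact h t ⟨ht, hvt⟩ hxt
  rw [heq]
  exact hcl.isOpen_compl

/-- The homeomorphism between a subset of a subtype and its image. -/
noncomputable def homeoImage {X : Type*} [TopologicalSpace X] {s : Set X} (A : Set ↥s) :
    ↥A ≃ₜ ↥(Subtype.val '' A) :=
  ((IsEmbedding.subtypeVal.comp (IsEmbedding.subtypeVal (p := (· ∈ A)))).toHomeomorph).trans
    (Homeomorph.setCongr (by rw [Set.range_comp, Subtype.range_coe]))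

end Stmt6Aux



/-- A countable locally finite simplicial complex in a finite-dimensional real vector space
admits a countable open covering of its underlying space all of whose nonempty finite
intersections are empty or contractible. -/
theorem stmt6 {E : Type*} [NormedAddCommGroup E] [NormedSpace ℝ E] [FiniteDimensional ℝ E]
    (K : Geometry.SimplicialComplex ℝ E)
    (hcount : K.faces.Countable)
    (hlocfin : ∀ x : K.space, ∃ V : Set K.space, IsOpen V ∧ x ∈ V ∧
      {s ∈ K.faces | ∃ y ∈ V, (y : E) ∈ convexHull ℝ (s : Set E)}.Finite) :
    ∃ U : ℕ → Set K.space, (∀ n, IsOpen (U n)) ∧ (⋃ n, U n) = Set.univ ∧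
      ∀ I : Finset ℕ, I.Nonempty →
        (⋂ i ∈ I, U i) = ∅ ∨ ContractibleSpace ↥(⋂ i ∈ I, U i) := by
  classical
  by_cases hWne : (⋃ s ∈ K.faces, (s : Set E)).Nonempty
  · obtain ⟨f, hf⟩ := (hcount.biUnion (fun s _ => s.finite_toSet.countable)).exists_eq_range hWne
    refine ⟨fun n => Stmt6Aux.star' K (f n), fun n => Stmt6Aux.isOpen_star' hlocfin (f n), ?_, ?_⟩
    · apply Set.eq_univ_of_forall
      intro x
      obtain ⟨s, hs, hxs, hmin⟩ := Stmt6Aux.exists_support x.2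
      have hsne : s.Nonempty :=
        Finset.nonempty_iff_ne_empty.2 (fun h => K.empty_notMem (h ▸ hs))
      obtain ⟨v, hv⟩ := hsne
      have hvW : v ∈ Set.range f := hf ▸ Set.mem_biUnion hs hv
      obtain ⟨n, rfl⟩ := hvW
      exact Set.mem_iUnion.2 ⟨n, fun t ht hxt => hmin t ht hxt hv⟩
    · intro I hI
      by_cases hA : (⋂ i ∈ I, Stmt6Aux.star' K (f i)).Nonempty
      swap
      · exact Or.inl (Set.not_nonempty_iff_eq_empty.1 hA)
      right
      obtain ⟨x, hxA⟩ := hA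
      have hxU : ∀ i ∈ I, x ∈ Stmt6Aux.star' K (f i) := fun i hi => Set.mem_iInter₂.1 hxA i hi
      obtain ⟨s, hs, hxs, hmin⟩ := Stmt6Aux.exists_support x.2
      have hfs : ∀ i ∈ I, f i ∈ s := fun i hi => hxU i hi s hs hxs
      set σ : Finset E := I.image f with hσ
      have hσs : σ ⊆ s := by
        intro y hy; obtain ⟨i, hi, rfl⟩ := Finset.mem_image.1 hy; exact hfs i hi
      have hσne : σ.Nonempty := hI.image f
      have hσf : σ ∈ K.faces := K.down_closed hs hσs hσne
      have hk0 : (0 : ℝ) < (σ.card : ℝ) := by exact_mod_cast Finset.card_pos.2 hσne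
      have hwb1 : ∑ _y ∈ σ, (σ.card : ℝ)⁻¹ = 1 := by
        rw [Finset.sum_const, nsmul_eq_mul]
        exact mul_inv_cancel₀ (ne_of_gt hk0)
      set b : E := ∑ y ∈ σ, (σ.card : ℝ)⁻¹ • y with hb
      have key : ∀ t : Finset E, t ∈ K.faces → ∀ ω : E → ℝ, (∀ y ∈ t, 0 ≤ ω y) →
          (∑ y ∈ t, ω y = 1) → (∀ i ∈ I, f i ∈ t ∧ 0 < ω (f i)) →
          ∃ h : (∑ y ∈ t, ω y • y) ∈ K.space,
            (⟨∑ y ∈ t, ω y • y, h⟩ : ↥K.space) ∈ ⋂ i ∈ I, Stmt6Aux.star' K (f i) := by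
        intro t ht ω hω0 hω1 hpos
        have hz : (∑ y ∈ t, ω y • y) ∈ convexHull ℝ (t : Set E) :=
          Finset.mem_convexHull'.2 ⟨ω, hω0, hω1, rfl⟩
        have hspace : (∑ y ∈ t, ω y • y) ∈ K.space :=
          Geometry.SimplicialComplex.mem_space_iff.2 ⟨t, ht, hz⟩
        refine ⟨hspace, Set.mem_iInter₂.2 fun i hi u hu hxu => ?_⟩
        exact Stmt6Aux.mem_of_coord_pos ht hu hω0 hω1 rfl (hpos i hi).1 (hpos i hi).2 hxu
      obtain ⟨hbspace, hbA⟩ :=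
        key σ hσf (fun _ => (σ.card : ℝ)⁻¹) (fun y _ => inv_nonneg.2 hk0.le) hwb1
          (fun i hi => ⟨Finset.mem_image_of_mem f hi, inv_pos.2 hk0⟩)
      set A : Set ↥K.space := ⋂ i ∈ I, Stmt6Aux.star' K (f i) with hAdef
      have hstar : StarConvex ℝ b (Subtype.val '' A) := by
        intro y hy a c ha hc hac
        rcases ha.eq_or_lt with rfl | ha'
        · have hc1 : c = 1 := by linarith
          rw [zero_smul, zero_add, hc1, one_smul]; exact hy
        obtain ⟨y', hy'A, rfl⟩ := hy
        obtain ⟨t, ht, hyt⟩ := Geometry.SimplicialComplex.mem_space_iff.1 y'.2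
        have hft : ∀ i ∈ I, f i ∈ t := fun i hi => Set.mem_iInter₂.1 hy'A i hi t ht hyt
        have hσt : σ ⊆ t := by
          intro z hz; obtain ⟨i, hi, rfl⟩ := Finset.mem_image.1 hz; exact hft i hi
        obtain ⟨w, hw0, hw1, hwy⟩ := Finset.mem_convexHull'.1 hyt
        set ω : E → ℝ := fun u => a * (if u ∈ σ then (σ.card : ℝ)⁻¹ else 0) + c * w u with hω
        have hfilt : t.filter (· ∈ σ) = σ := by
          rw [Finset.filter_mem_eq_inter, Finset.inter_eq_right.2 hσt]
        have hite0 : ∀ u : E, (0:ℝ) ≤ (if u ∈ σ then (σ.card : ℝ)⁻¹ else 0) := by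
          intro u; split
          · exact inv_nonneg.2 hk0.le
          · exact le_refl 0
        have hω0' : ∀ u ∈ t, 0 ≤ ω u := fun u hu =>
          add_nonneg (mul_nonneg ha'.le (hite0 u)) (mul_nonneg hc (hw0 u hu))
        have hsum_ite : ∑ u ∈ t, (if u ∈ σ then (σ.card : ℝ)⁻¹ else 0) = 1 := by
          rw [← Finset.sum_filter, hfilt]; exact hwb1
        have hω1' : ∑ u ∈ t, ω u = 1 := by
          rw [hω]
          simp only
          rw [Finset.sum_add_distrib, ← Finset.mul_sum, ← Finset.mul_sum, hsum_ite, hw1,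
            mul_one, mul_one, hac]
        have hvec_ite : ∑ u ∈ t, (if u ∈ σ then (σ.card : ℝ)⁻¹ else 0) • u = b := by
          simp only [ite_smul, zero_smul]
          rw [← Finset.sum_filter, hfilt]
        have hvec : ∑ u ∈ t, ω u • u = a • b + c • (y' : E) := by
          calc ∑ u ∈ t, ω u • u
              = ∑ u ∈ t, (a • ((if u ∈ σ then (σ.card : ℝ)⁻¹ else 0) • u) + c • (w u • u)) := by
                refine Finset.sum_congr rfl fun u _ => ?_
                rw [hω]; simp only
                rw [add_smul, mul_smul, mul_smul]
            _ = a • (∑ u ∈ t, (if u ∈ σ then (σ.card : ℝ)⁻¹ else 0) • u)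
                  + c • (∑ u ∈ t, w u • u) := by
                rw [Finset.sum_add_distrib, Finset.smul_sum, Finset.smul_sum]
            _ = a • b + c • (y' : E) := by rw [hvec_ite, hwy]
        have hposA : ∀ i ∈ I, f i ∈ t ∧ 0 < ω (f i) := by
          intro i hi
          refine ⟨hft i hi, ?_⟩
          have hfiσ : f i ∈ σ := Finset.mem_image_of_mem f hi
          have : ω (f i) = a * (σ.card : ℝ)⁻¹ + c * w (f i) := by
            rw [hω]; simp only [if_pos hfiσ]
          rw [this]
          exact add_pos_of_pos_of_nonneg (mul_pos ha' (inv_pos.2 hk0))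
            (mul_nonneg hc (hw0 _ (hft i hi)))
        obtain ⟨hzspace, hzA⟩ := key t ht ω hω0' hω1' hposA
        exact ⟨⟨_, hzspace⟩, hzA, hvec⟩
      have hcontr : ContractibleSpace ↥(Subtype.val '' A) :=
        hstar.contractibleSpace ⟨b, ⟨b, hbspace⟩, hbA, rfl⟩
      exact (Stmt6Aux.homeoImage A).contractibleSpace_iff.2 hcontr
  · have hE : IsEmpty ↥K.space := by
      rw [Set.not_nonempty_iff_eq_empty] at hWne
      refine ⟨fun x => ?_⟩
      obtain ⟨s, hs, hxs⟩ := Geometry.SimplicialComplex.mem_space_iff.1 x.2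
      have hsne : s.Nonempty :=
        Finset.nonempty_iff_ne_empty.2 (fun h => K.empty_notMem (h ▸ hs))
      obtain ⟨v, hv⟩ := hsne
      have hvW : v ∈ ⋃ s ∈ K.faces, (s : Set E) := Set.mem_biUnion hs hv
      rw [hWne] at hvW
      exact hvW
    refine ⟨fun _ => Set.univ, fun _ => isOpen_univ, Set.iUnion_const _, fun I hI => Or.inl ?_⟩
    exact Set.eq_empty_of_isEmpty _
end

section
/- Let F be a presheaf of abelian groups on the category of topological spaces (a contravariant functor from Top to abelian groups). Let X, Y be topological spaces and f₀, f₁ : X → Y continuous maps. If f₀ and f₁ are homotopic, then the chain maps sing_𝕀F(f₀) and sing_𝕀F(f₁) from sing_𝕀F(Y) to sing_𝕀F(X), given in degree n by F(f₀ × id_{[0,1]ⁿ}) and F(f₁ × id_{[0,1]ⁿ}) respectively, induce the same map on homology in every degree. -/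
open CategoryTheory Opposite

namespace Stmt8

/-- The topological `n`-cube `[0,1]ⁿ`. -/
abbrev Cube (n : ℕ) : Type := Fin n → unitInterval

/-- The object `X × [0,1]ⁿ` of `TopCat`. -/
def cubeObj (X : TopCat) (n : ℕ) : TopCat := TopCat.of (↥X × Cube n)

/-- The face map `id_X × δ_{i,ε} : X × [0,1]ⁿ → X × [0,1]ⁿ⁺¹` inserting the constant `ε` as
the `i`-th cube coordinate. -/
def face (X : TopCat) (n : ℕ) (i : Fin (n + 1)) (ε : unitInterval) :
    cubeObj X n ⟶ cubeObj X (n + 1) :=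
  TopCat.ofHom ⟨fun p => (p.1, (i.insertNth ε p.2 : Cube (n + 1))),
    (continuous_fst.prodMk ((Continuous.finInsertNth i continuous_const
      continuous_id).comp continuous_snd))⟩

/-- The map `f × id_{[0,1]ⁿ}` induced by a continuous map `f : X → Y`. -/
def cubeMap {X Y : TopCat} (f : C(X, Y)) (n : ℕ) : cubeObj X n ⟶ cubeObj Y n :=
  TopCat.ofHom ⟨fun p => (f p.1, p.2), ((f.continuous.comp continuous_fst).prodMk continuous_snd)⟩

variable (F : TopCatᵒᵖ ⥤ AddCommGrpCat)

/-- The `n`-th term `F(X × [0,1]ⁿ)` of the cubical complex `sing_𝕀 F (X)`. -/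
abbrev ob (X : TopCat) (n : ℕ) : Type _ := F.obj (op (cubeObj X n))

/-- The differential of the cubical complex `sing_𝕀 F (X)`:
`Σ_{i=1}^{n+1} (−1)ⁱ (F(id × δ_{i,0}) − F(id × δ_{i,1}))`. -/
def diff (X : TopCat) (n : ℕ) : ob F X (n + 1) →+ ob F X n :=
  ∑ i : Fin (n + 1),
    ((-1 : ℤ) ^ ((i : ℕ) + 1)) •
      (((F.map (face X n i 0).op).hom : ob F X (n + 1) →+ ob F X n) -
       ((F.map (face X n i 1).op).hom : ob F X (n + 1) →+ ob F X n))

/-- The chain map `sing_𝕀 F (f) : sing_𝕀 F (Y) → sing_𝕀 F (X)` induced by a continuous map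
`f : X → Y`, given in degree `n` by `F(f × id_{[0,1]ⁿ})`. -/
def indMap {X Y : TopCat} (f : C(X, Y)) (n : ℕ) : ob F Y n →+ ob F X n :=
  ((F.map (cubeMap f n).op).hom : ob F Y n →+ ob F X n)

end Stmt8

namespace Stmt8Aux
open Stmt8

lemma insertNth_succ' {n : ℕ} {β : Type*} (j : Fin (n+1)) (ε : β) (c : Fin (n+1) → β) :
    (Fin.insertNth j.succ ε c : Fin (n+2) → β) =
      Fin.cons (c 0) (Fin.insertNth j ε (fun k => c k.succ)) := by
  funext k
  induction k using Fin.cases with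
  | zero =>
    have : (0 : Fin (n+2)) = j.succ.succAbove 0 := by
      simp [Fin.succAbove, Fin.lt_iff_val_lt_val]
    rw [this, Fin.insertNth_apply_succAbove]
    simp
  | succ m =>
    rw [Fin.cons_succ]
    induction m using Fin.succAboveCases (i := j) with
    | x => simp
    | p k =>
      rw [← Fin.succ_succAbove_succ, Fin.insertNth_apply_succAbove, Fin.insertNth_apply_succAbove]

variable {X Y : TopCat} {f₀ f₁ : C(X, Y)}

/-- The map `X × [0,1]ⁿ⁺¹ → Y × [0,1]ⁿ` using the homotopy in the first cube coordinate. -/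
def qmap (h : ContinuousMap.Homotopy f₀ f₁) (n : ℕ) : cubeObj X (n + 1) ⟶ cubeObj Y n :=
  TopCat.ofHom ⟨fun p => (h (p.2 0, p.1), fun j => p.2 j.succ),
    (h.continuous.comp (((continuous_apply (0 : Fin (n+1))).comp continuous_snd).prodMk
        continuous_fst)).prodMk
      (continuous_pi fun j => (continuous_apply j.succ).comp continuous_snd)⟩

lemma face_zero_comp_zero (h : ContinuousMap.Homotopy f₀ f₁) (n : ℕ) :
    face X n 0 0 ≫ qmap h n = cubeMap f₀ n := by
  ext p
  show (h ((Fin.insertNth 0 0 p.2 : Cube (n+1)) 0, p.1),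
      fun j => (Fin.insertNth 0 0 p.2 : Cube (n+1)) j.succ) = (f₀ p.1, p.2)
  rw [show (Fin.insertNth 0 (0:unitInterval) p.2 : Cube (n+1)) = Fin.cons 0 p.2 from
    Fin.insertNth_zero' _ _]
  simp [h.apply_zero]

lemma face_zero_comp_one (h : ContinuousMap.Homotopy f₀ f₁) (n : ℕ) :
    face X n 0 1 ≫ qmap h n = cubeMap f₁ n := by
  ext p
  show (h ((Fin.insertNth 0 1 p.2 : Cube (n+1)) 0, p.1),
      fun j => (Fin.insertNth 0 1 p.2 : Cube (n+1)) j.succ) = (f₁ p.1, p.2)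
  rw [show (Fin.insertNth 0 (1:unitInterval) p.2 : Cube (n+1)) = Fin.cons 1 p.2 from
    Fin.insertNth_zero' _ _]
  simp [h.apply_one]

lemma face_succ_comp (h : ContinuousMap.Homotopy f₀ f₁) (n : ℕ) (j : Fin (n + 1))
    (ε : unitInterval) :
    face X (n + 1) j.succ ε ≫ qmap h (n + 1) = qmap h n ≫ face Y n j ε := by
  ext p
  show (h ((Fin.insertNth j.succ ε p.2 : Cube (n+2)) 0, p.1),
      fun k => (Fin.insertNth j.succ ε p.2 : Cube (n+2)) k.succ) =
    (h (p.2 0, p.1), (Fin.insertNth j ε (fun k => p.2 k.succ) : Cube (n+1)))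
  rw [insertNth_succ']
  simp

variable (F : TopCatᵒᵖ ⥤ AddCommGrpCat)

lemma map_map {A B C : TopCat} (a : A ⟶ B) (b : B ⟶ C) (z : F.obj (op C)) :
    F.map a.op (F.map b.op z) = F.map (a ≫ b).op z := by
  rw [op_comp, F.map_comp]; rfl

lemma diff_apply (Z : TopCat) (n : ℕ) (z : ob F Z (n + 1)) :
    diff F Z n z = ∑ i : Fin (n + 1),
      ((-1 : ℤ) ^ ((i : ℕ) + 1)) •
        (F.map (face Z n i 0).op z - F.map (face Z n i 1).op z) := by
  simp only [diff, AddMonoidHom.finset_sum_apply]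
  refine Finset.sum_congr rfl fun i _ => ?_
  rw [AddMonoidHom.smul_apply, AddMonoidHom.sub_apply]

lemma key0 (h : ContinuousMap.Homotopy f₀ f₁) (x : ob F Y 0) :
    diff F X 0 (F.map (qmap h 0).op x) = indMap F f₁ 0 x - indMap F f₀ 0 x := by
  rw [diff_apply, Fin.sum_univ_one, map_map, map_map, face_zero_comp_zero h 0,
    face_zero_comp_one h 0]
  show (-1 : ℤ) ^ (0 + 1) • (indMap F f₀ 0 x - indMap F f₁ 0 x) = _
  simp

lemma keyS (h : ContinuousMap.Homotopy f₀ f₁) (n : ℕ) (x : ob F Y (n + 1)) :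
    diff F X (n + 1) (F.map (qmap h (n + 1)).op x) =
      indMap F f₁ (n + 1) x - indMap F f₀ (n + 1) x
        - F.map (qmap h n).op (diff F Y n x) := by
  have hsum : ∀ (j : Fin (n + 1)) (ε : unitInterval),
      F.map (face X (n + 1) (Fin.succ j) ε).op (F.map (qmap h (n + 1)).op x) =
        F.map (qmap h n).op (F.map (face Y n j ε).op x) := by
    intro j ε; rw [map_map, face_succ_comp, ← map_map]
  rw [diff_apply, Fin.sum_univ_succ, map_map, map_map, face_zero_comp_zero h (n+1),
    face_zero_comp_one h (n+1)]
  simp only [hsum]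
  rw [diff_apply, map_sum]
  have hterm : ∑ j : Fin (n+1), (-1:ℤ)^(((Fin.succ j : Fin (n+2)) : ℕ)+1) •
        (F.map (qmap h n).op (F.map (face Y n j 0).op x)
          - F.map (qmap h n).op (F.map (face Y n j 1).op x)) =
      -∑ j : Fin (n+1), F.map (qmap h n).op ((-1:ℤ)^((j:ℕ)+1) •
        (F.map (face Y n j 0).op x - F.map (face Y n j 1).op x)) := by
    rw [← Finset.sum_neg_distrib]
    refine Finset.sum_congr rfl fun j _ => ?_
    rw [map_zsmul, map_sub, Fin.val_succ, pow_succ _ ((j:ℕ)+1), mul_comm, mul_smul, neg_one_smul]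
  rw [hterm]
  show (-1 : ℤ) ^ (0 + 1) • (indMap F f₀ (n+1) x - indMap F f₁ (n+1) x) + _ = _
  rw [pow_one, neg_one_smul, neg_sub]
  abel

end Stmt8Aux


open Stmt8 in
/-- Homotopic maps induce the same map on the homology of the cubical complex of any
presheaf of abelian groups on `Top`: for every cycle `x` of `sing_𝕀 F (Y)`, the difference
`sing_𝕀 F (f₀)(x) - sing_𝕀 F (f₁)(x)` is a boundary of `sing_𝕀 F (X)` (in degree `0` every
element is a cycle). -/
theorem stmt8 (F : TopCatᵒᵖ ⥤ AddCommGrpCat) (X Y : TopCat) (f₀ f₁ : C(X, Y))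
    (h : f₀.Homotopic f₁) :
    (∀ x : ob F Y 0, ∃ y : ob F X 1,
        diff F X 0 y = indMap F f₀ 0 x - indMap F f₁ 0 x) ∧
    (∀ (n : ℕ) (x : ob F Y (n + 1)), diff F Y n x = 0 →
        ∃ y : ob F X (n + 2),
          diff F X (n + 1) y = indMap F f₀ (n + 1) x - indMap F f₁ (n + 1) x) := by
  obtain ⟨hh⟩ := h
  constructor
  · intro x
    exact ⟨-(F.map (Stmt8Aux.qmap hh 0).op x), by rw [map_neg, Stmt8Aux.key0, neg_sub]⟩
  · intro n x hx
    exact ⟨-(F.map (Stmt8Aux.qmap hh (n+1)).op x), by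
      rw [map_neg, Stmt8Aux.keyS, hx, map_zero, sub_zero, neg_sub]⟩
end

section
/- Let F be a presheaf of abelian groups on the category of topological spaces (a contravariant functor from Top to abelian groups). If f : X → Y is a homotopy equivalence of topological spaces, then the induced chain map sing_𝕀F(f) : sing_𝕀F(Y) → sing_𝕀F(X), given in degree n by F(f × id_{[0,1]ⁿ}), is a quasi-isomorphism of chain complexes of abelian groups. -/
open CategoryTheory Opposite

namespace Stmt9

/-- The topological `n`-cube `[0,1]ⁿ`. -/
abbrev Cube (n : ℕ) : Type := Fin n → unitInterval

/-- The object `X × [0,1]ⁿ` of `TopCat`. -/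
def cubeObj (X : TopCat) (n : ℕ) : TopCat := TopCat.of (↥X × Cube n)

/-- The face map `id_X × δ_{i,ε} : X × [0,1]ⁿ → X × [0,1]ⁿ⁺¹` inserting the constant `ε` as
the `i`-th cube coordinate. -/
def face (X : TopCat) (n : ℕ) (i : Fin (n + 1)) (ε : unitInterval) :
    cubeObj X n ⟶ cubeObj X (n + 1) :=
  TopCat.ofHom ⟨fun p => (p.1, (i.insertNth ε p.2 : Cube (n + 1))),
    (continuous_fst.prodMk ((Continuous.finInsertNth i continuous_const
      continuous_id).comp continuous_snd))⟩

/-- The map `f × id_{[0,1]ⁿ}` induced by a continuous map `f : X → Y`. -/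
def cubeMap {X Y : TopCat} (f : C(X, Y)) (n : ℕ) : cubeObj X n ⟶ cubeObj Y n :=
  TopCat.ofHom ⟨fun p => (f p.1, p.2), ((f.continuous.comp continuous_fst).prodMk continuous_snd)⟩

variable (F : TopCatᵒᵖ ⥤ AddCommGrpCat)

/-- The `n`-th term `F(X × [0,1]ⁿ)` of the cubical complex `sing_𝕀 F (X)`. -/
abbrev ob (X : TopCat) (n : ℕ) : Type _ := F.obj (op (cubeObj X n))

/-- The differential of the cubical complex `sing_𝕀 F (X)`:
`Σ_{i=1}^{n+1} (−1)ⁱ (F(id × δ_{i,0}) − F(id × δ_{i,1}))`. -/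
def diff (X : TopCat) (n : ℕ) : ob F X (n + 1) →+ ob F X n :=
  ∑ i : Fin (n + 1),
    ((-1 : ℤ) ^ ((i : ℕ) + 1)) •
      (((F.map (face X n i 0).op).hom : ob F X (n + 1) →+ ob F X n) -
       ((F.map (face X n i 1).op).hom : ob F X (n + 1) →+ ob F X n))

/-- The chain map `sing_𝕀 F (f) : sing_𝕀 F (Y) → sing_𝕀 F (X)` induced by a continuous map
`f : X → Y`, given in degree `n` by `F(f × id_{[0,1]ⁿ})`. -/
def indMap {X Y : TopCat} (f : C(X, Y)) (n : ℕ) : ob F Y n →+ ob F X n :=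
  ((F.map (cubeMap f n).op).hom : ob F Y n →+ ob F X n)

/-- Cycles of the cubical complex: every element in degree `0`, kernel of the differential
in positive degrees. -/
def IsCycle (X : TopCat) : ∀ n : ℕ, ob F X n → Prop
  | 0, _ => True
  | n + 1, x => diff F X n x = 0

/-- Boundaries of the cubical complex. -/
def IsBoundary (X : TopCat) (n : ℕ) (x : ob F X n) : Prop :=
  ∃ y : ob F X (n + 1), diff F X n y = x

/-! ### Auxiliary material for the proof -/

lemma insertNth_succ' {n : ℕ} {β : Type*} (j : Fin (n + 1)) (x : β) (p : Fin (n + 1) → β) :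
    Fin.insertNth (α := fun _ => β) j.succ x p
      = Fin.cons (p 0) (Fin.insertNth (α := fun _ => β) j x (Fin.tail p)) := by
  funext k
  refine Fin.succAboveCases j.succ ?_ ?_ k
  · rw [Fin.insertNth_apply_same, Fin.cons_succ, Fin.insertNth_apply_same]
  · intro m
    rw [Fin.insertNth_apply_succAbove]
    refine Fin.cases ?_ (fun m' => ?_) m
    · rw [Fin.succ_succAbove_zero, Fin.cons_zero]
    · rw [Fin.succ_succAbove_succ, Fin.cons_succ, Fin.insertNth_apply_succAbove, Fin.tail]

lemma Fcomp {P Q R : TopCat} (u : P ⟶ Q) (v : Q ⟶ R) (x : F.obj (op R)) :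
    (F.map u.op).hom ((F.map v.op).hom x) = (F.map (u ≫ v).op).hom x := by
  rw [op_comp, F.map_comp]; rfl

lemma smul_sub_apply {A B : AddCommGrpCat} (c : ℤ) (f g : A ⟶ B) (x : A) :
    ((c • (f.hom - g.hom)) x) = c • (f.hom x - g.hom x) := rfl

lemma face_cubeMap {X Y : TopCat} (f : C(X, Y)) (n : ℕ) (i : Fin (n + 1)) (ε : unitInterval) :
    face X n i ε ≫ cubeMap f (n + 1) = cubeMap f n ≫ face Y n i ε :=
  TopCat.ext fun _ => rfl

lemma ind_face_comm {X Y : TopCat} (f : C(X, Y)) (n : ℕ) (i : Fin (n + 1)) (ε : unitInterval)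
    (x : ob F Y (n + 1)) :
    (F.map (face X n i ε).op).hom (indMap F f (n + 1) x) = indMap F f n ((F.map (face Y n i ε).op).hom x) := by
  unfold indMap
  rw [Fcomp, Fcomp, face_cubeMap]

lemma chain_map {X Y : TopCat} (f : C(X, Y)) (n : ℕ) :
    (diff F X n).comp (indMap F f (n + 1)) = (indMap F f n).comp (diff F Y n) := by
  ext x
  simp only [AddMonoidHom.comp_apply]
  unfold diff
  rw [AddMonoidHom.finset_sum_apply, AddMonoidHom.finset_sum_apply, map_sum]
  refine Finset.sum_congr rfl fun i _ => ?_
  rw [smul_sub_apply, smul_sub_apply, ind_face_comm, ind_face_comm, map_zsmul, map_sub]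

lemma cubeMap_id (X : TopCat) (n : ℕ) :
    cubeMap (ContinuousMap.id X) n = 𝟙 (cubeObj X n) :=
  TopCat.ext fun _ => rfl

lemma ind_id (X : TopCat) (n : ℕ) (x : ob F X n) :
    indMap F (ContinuousMap.id X) n x = x := by
  unfold indMap
  rw [cubeMap_id]
  simp

lemma cubeMap_comp {X Y Z : TopCat} (a : C(X, Y)) (b : C(Y, Z)) (n : ℕ) :
    cubeMap a n ≫ cubeMap b n = cubeMap (b.comp a) n :=
  TopCat.ext fun _ => rfl

lemma ind_comp {X Y Z : TopCat} (a : C(X, Y)) (b : C(Y, Z)) (n : ℕ) (x : ob F Z n) :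
    indMap F (b.comp a) n x = indMap F a n (indMap F b n x) := by
  unfold indMap
  rw [Fcomp, cubeMap_comp]

/-- The prism operator `X × [0,1]ⁿ⁺¹ → Y × [0,1]ⁿ` associated to a homotopy. -/
def prism {X Y : TopCat} {f₀ f₁ : C(X, Y)} (H : f₀.Homotopy f₁) (n : ℕ) :
    cubeObj X (n + 1) ⟶ cubeObj Y n :=
  TopCat.ofHom ⟨fun p => (H (p.2 0, p.1), Fin.tail p.2),
    ((H.continuous.comp (((continuous_apply (0 : Fin (n + 1))).comp continuous_snd).prodMk
      continuous_fst)).prodMk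
      (continuous_pi fun i => (continuous_apply i.succ).comp continuous_snd))⟩

lemma face_zero_apply (X : TopCat) (n : ℕ) (ε : unitInterval) (p : ↥(cubeObj X n)) :
    (face X n 0 ε) p = (p.1, Fin.cons ε p.2) := by
  show (p.1, _) = _
  exact Prod.ext rfl (Fin.insertNth_zero' _ _)

lemma prism_apply {X Y : TopCat} {f₀ f₁ : C(X, Y)} (H : f₀.Homotopy f₁) (n : ℕ)
    (p : ↥(cubeObj X (n + 1))) :
    (prism H n) p = (H (p.2 0, p.1), Fin.tail p.2) := rfl

lemma cubeMap_apply {X Y : TopCat} (f : C(X, Y)) (n : ℕ) (p : ↥(cubeObj X n)) :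
    (cubeMap f n) p = (f p.1, p.2) := rfl

lemma face_apply (X : TopCat) (n : ℕ) (i : Fin (n + 1)) (ε : unitInterval)
    (p : ↥(cubeObj X n)) :
    (face X n i ε) p = (p.1, i.insertNth ε p.2) := rfl

lemma prism_face_zero {X Y : TopCat} {f₀ f₁ : C(X, Y)} (H : f₀.Homotopy f₁) (n : ℕ) :
    (face X n 0 0 ≫ prism H n = cubeMap f₀ n) ∧ (face X n 0 1 ≫ prism H n = cubeMap f₁ n) := by
  constructor
  · apply TopCat.ext; intro p
    rw [TopCat.comp_app, face_zero_apply]; erw [prism_apply, cubeMap_apply]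
    simp [Fin.cons_zero, Fin.tail_cons, H.apply_zero]
    rfl
  · apply TopCat.ext; intro p
    rw [TopCat.comp_app, face_zero_apply]; erw [prism_apply, cubeMap_apply]
    simp [Fin.cons_zero, Fin.tail_cons, H.apply_one]
    rfl

lemma prism_face_succ {X Y : TopCat} {f₀ f₁ : C(X, Y)} (H : f₀.Homotopy f₁) (n : ℕ)
    (j : Fin (n + 1)) (ε : unitInterval) :
    face X (n + 1) j.succ ε ≫ prism H (n + 1) = prism H n ≫ face Y n j ε := by
  apply TopCat.ext; intro p
  rw [TopCat.comp_app, TopCat.comp_app]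
  rw [show (face X (n + 1) j.succ ε) p
      = (p.1, Fin.cons (p.2 0) (Fin.insertNth (α := fun _ => unitInterval) j ε (Fin.tail p.2)))
    from congrArg _ (insertNth_succ' j ε p.2)]
  erw [prism_apply]

lemma diff_hop_zero {X Y : TopCat} {f₀ f₁ : C(X, Y)} (H : f₀.Homotopy f₁) (y : ob F Y 0) :
    diff F X 0 ((F.map (prism H 0).op).hom y) = indMap F f₁ 0 y - indMap F f₀ 0 y := by
  unfold diff
  rw [AddMonoidHom.finset_sum_apply, Fin.sum_univ_one]
  rw [smul_sub_apply, Fcomp, Fcomp, (prism_face_zero H 0).1, (prism_face_zero H 0).2]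
  simp only [Fin.val_zero, zero_add, pow_one, neg_smul, one_smul, neg_sub]
  rfl

set_option maxHeartbeats 1000000 in
lemma diff_hop_succ {X Y : TopCat} {f₀ f₁ : C(X, Y)} (H : f₀.Homotopy f₁) (k : ℕ)
    (y : ob F Y (k + 1)) :
    diff F X (k + 1) ((F.map (prism H (k + 1)).op).hom y)
      = indMap F f₁ (k + 1) y - indMap F f₀ (k + 1) y
        - (F.map (prism H k).op).hom (diff F Y k y) := by
  unfold diff
  rw [AddMonoidHom.finset_sum_apply, AddMonoidHom.finset_sum_apply, map_sum, Fin.sum_univ_succ]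
  simp only [smul_sub_apply]
  simp only [Fcomp]
  simp only [(prism_face_zero H (k + 1)).1, (prism_face_zero H (k + 1)).2, prism_face_succ]
  simp only [map_zsmul, map_sub, Fcomp]
  have hc : ∀ (x : Fin (k + 1)) (z : ob F X (k + 1)),
      ((-1 : ℤ) ^ ((x.succ : ℕ) + 1)) • z = -(((-1 : ℤ) ^ ((x : ℕ) + 1)) • z) := by
    intro x z
    rw [Fin.val_succ, pow_succ, mul_neg_one, neg_zsmul]
  rw [Finset.sum_congr rfl (fun x _ => hc x _), Finset.sum_neg_distrib]
  simp only [Fin.val_zero, zero_add, pow_one, neg_one_zsmul]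
  unfold indMap
  abel

end Stmt9

open Stmt9 in
/-- If `f : X → Y` is a homotopy equivalence of topological spaces, then for any presheaf of
abelian groups `F` on `Top` the induced chain map `sing_𝕀 F (f) : sing_𝕀 F (Y) → sing_𝕀 F (X)`
is a quasi-isomorphism: it is a chain map, and it induces a bijection on homology in every
degree (surjectivity: every cycle of `sing_𝕀 F (X)` agrees with the image of a cycle of
`sing_𝕀 F (Y)` up to a boundary; injectivity: a cycle of `sing_𝕀 F (Y)` whose image is a
boundary is itself a boundary). -/
theorem stmt9 (F : TopCatᵒᵖ ⥤ AddCommGrpCat) (X Y : TopCat) (f : C(X, Y))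
    (hf : ∃ g : C(Y, X),
      (g.comp f).Homotopic (ContinuousMap.id X) ∧ (f.comp g).Homotopic (ContinuousMap.id Y)) :
    (∀ n : ℕ, (diff F X n).comp (indMap F f (n + 1)) = (indMap F f n).comp (diff F Y n)) ∧
    (∀ (n : ℕ) (x : ob F X n), IsCycle F X n x →
        ∃ y : ob F Y n, IsCycle F Y n y ∧ IsBoundary F X n (x - indMap F f n y)) ∧
    (∀ (n : ℕ) (y : ob F Y n), IsCycle F Y n y → IsBoundary F X n (indMap F f n y) →
        IsBoundary F Y n y) := by
  obtain ⟨g, hgf, hfg⟩ := hf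
  obtain ⟨H1⟩ := hgf
  obtain ⟨H2⟩ := hfg
  refine ⟨fun n => chain_map F f n, ?_, ?_⟩
  · intro n x hx
    refine ⟨indMap F g n x, ?_, ⟨(F.map (prism H1 n).op).hom x, ?_⟩⟩
    · cases n with
      | zero => trivial
      | succ m =>
          show diff F Y m (indMap F g (m + 1) x) = 0
          have h := DFunLike.congr_fun (chain_map F g m) x
          rw [AddMonoidHom.comp_apply, AddMonoidHom.comp_apply] at h
          rw [h, show diff F X m x = 0 from hx, map_zero]
    · cases n with
      | zero =>
          rw [diff_hop_zero F H1 x, ind_id, ind_comp]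
      | succ m =>
          rw [diff_hop_succ F H1 m x, ind_id, ind_comp,
            show diff F X m x = 0 from hx, map_zero, sub_zero]
  · intro n y hy hb
    obtain ⟨z, hz⟩ := hb
    refine ⟨indMap F g (n + 1) z + (F.map (prism H2 n).op).hom y, ?_⟩
    rw [map_add]
    have h1 : diff F Y n (indMap F g (n + 1) z) = indMap F g n (indMap F f n y) := by
      have h := DFunLike.congr_fun (chain_map F g n) z
      rw [AddMonoidHom.comp_apply, AddMonoidHom.comp_apply] at h
      rw [h, hz]
    cases n with
    | zero =>
        rw [h1, diff_hop_zero F H2 y, ind_id, ind_comp F g f 0 y]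
        abel
    | succ m =>
        rw [h1, diff_hop_succ F H2 m y, ind_id, ind_comp F g f (m + 1) y,
          show diff F Y m y = 0 from hy, map_zero, sub_zero]
        abel
end

section
/- Let S be a topological space and F a presheaf of abelian groups on the category of topological spaces over S (a contravariant functor from the over-category Top/S to abelian groups). Let (X, h_X) and (Y, h_Y) be spaces over S (h_X : X → S, h_Y : Y → S continuous), and regard X × [0,1]ⁿ as a space over S via h_X composed with the projection, and similarly for Y. Let f₀, f₁ : X → Y be continuous maps over S (h_Y ∘ f_i = h_X) which are homotopic over S, i.e., there exists a continuous h : X × [0,1] → Y with h_Y ∘ h = h_X ∘ pr_X, f₀ = h(·,0) and f₁ = h(·,1). Then the chain maps from the cubical complex (n ↦ F(Y × [0,1]ⁿ over S)) to the cubical complex (n ↦ F(X × [0,1]ⁿ over S)) induced by f₀ × id and f₁ × id induce the same map on homology in every degree; consequently, if f : X → Y is a homotopy equivalence over S, the induced chain map is a quasi-isomorphism. -/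
open CategoryTheory Opposite

namespace Stmt10

/-- The topological `n`-cube `[0,1]ⁿ`. -/
abbrev Cube (n : ℕ) : Type := Fin n → unitInterval

variable (S : TopCat)

/-- The object `X × [0,1]ⁿ` of `TopCat`. -/
def cubeTop (X : TopCat) (n : ℕ) : TopCat := TopCat.of (↥X × Cube n)

/-- The projection `X × [0,1]ⁿ → X`. -/
def cubeProj (X : TopCat) (n : ℕ) : cubeTop X n ⟶ X := TopCat.ofHom ⟨Prod.fst, continuous_fst⟩

/-- `X × [0,1]ⁿ` as a space over `S`, via `h_X` composed with the projection. -/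
def cubeOver {X : TopCat} (hX : X ⟶ S) (n : ℕ) : Over S :=
  Over.mk (cubeProj X n ≫ hX)

/-- The face map `id_X × δ_{i,ε} : X × [0,1]ⁿ → X × [0,1]ⁿ⁺¹` (inserting the constant `ε`
as the `i`-th cube coordinate), as a morphism over `S`. -/
def face {X : TopCat} (hX : X ⟶ S) (n : ℕ) (i : Fin (n + 1)) (ε : unitInterval) :
    cubeOver S hX n ⟶ cubeOver S hX (n + 1) :=
  Over.homMk
    (TopCat.ofHom ⟨fun p => (p.1, (i.insertNth ε p.2 : Cube (n + 1))),
      (continuous_fst.prodMk ((Continuous.finInsertNth i continuous_const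
        continuous_id).comp continuous_snd))⟩)
    rfl

/-- The map `f × id_{[0,1]ⁿ}` induced by a continuous map `f : X → Y` over `S`, as a
morphism over `S`. -/
def cubeMap {X Y : TopCat} (hX : X ⟶ S) (hY : Y ⟶ S) (f : C(X, Y))
    (hf : ∀ x, hY (f x) = hX x) (n : ℕ) :
    cubeOver S hX n ⟶ cubeOver S hY n :=
  Over.homMk
    (TopCat.ofHom ⟨fun p => (f p.1, p.2), ((f.continuous.comp continuous_fst).prodMk continuous_snd)⟩)
    (by ext p; exact hf p.1)

variable (F : (Over S)ᵒᵖ ⥤ AddCommGrpCat)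

/-- The `n`-th term `F(X × [0,1]ⁿ / S)` of the relative cubical complex. -/
abbrev ob {X : TopCat} (hX : X ⟶ S) (n : ℕ) : Type _ := F.obj (op (cubeOver S hX n))

/-- The differential of the relative cubical complex:
`Σ_{i=1}^{n+1} (−1)ⁱ (F(id × δ_{i,0}) − F(id × δ_{i,1}))`. -/
def diff {X : TopCat} (hX : X ⟶ S) (n : ℕ) : ob S F hX (n + 1) →+ ob S F hX n :=
  ∑ i : Fin (n + 1),
    ((-1 : ℤ) ^ ((i : ℕ) + 1)) •
      (((F.map (face S hX n i 0).op).hom : ob S F hX (n + 1) →+ ob S F hX n) -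
       ((F.map (face S hX n i 1).op).hom : ob S F hX (n + 1) →+ ob S F hX n))

/-- The chain map induced by a continuous map `f : X → Y` over `S`, given in degree `n` by
`F(f × id_{[0,1]ⁿ})`. -/
def indMap {X Y : TopCat} (hX : X ⟶ S) (hY : Y ⟶ S) (f : C(X, Y))
    (hf : ∀ x, hY (f x) = hX x) (n : ℕ) : ob S F hY n →+ ob S F hX n :=
  ((F.map (cubeMap S hX hY f hf n).op).hom : ob S F hY n →+ ob S F hX n)

/-- Two continuous maps `u v : A → B` over `S` are homotopic over `S` if there is a homotopy
`h : A × [0,1] → B` from `u` to `v` with `h_B ∘ h = h_A ∘ pr_A`. -/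
def HtpOver {A B : TopCat} (hA : A ⟶ S) (hB : B ⟶ S) (u v : C(A, B)) : Prop :=
  ∃ h : C(↥A × unitInterval, B),
    (∀ p : ↥A × unitInterval, hB (h p) = hA p.1) ∧
    (∀ a : ↥A, h (a, 0) = u a) ∧ (∀ a : ↥A, h (a, 1) = v a)

/-- Cycles of the relative cubical complex. -/
def IsCycle {X : TopCat} (hX : X ⟶ S) : ∀ n : ℕ, ob S F hX n → Prop
  | 0, _ => True
  | n + 1, x => diff S F hX n x = 0

/-- Boundaries of the relative cubical complex. -/
def IsBoundary {X : TopCat} (hX : X ⟶ S) (n : ℕ) (x : ob S F hX n) : Prop :=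
  ∃ y : ob S F hX (n + 1), diff S F hX n y = x

end Stmt10
open CategoryTheory Opposite Stmt10

namespace Aux10

lemma tail_insertNth {n : ℕ} {α : Type*} (j : Fin (n + 1)) (ε : α) (u : Fin (n + 1) → α) :
    Fin.tail (α := fun _ => α) (Fin.insertNth (α := fun _ => α) j.succ ε u) =
      Fin.insertNth (α := fun _ => α) j ε (Fin.tail (α := fun _ => α) u) := by
  funext k
  by_cases hk : k = j
  · subst hk
    simp [Fin.tail, Fin.insertNth_apply_same]
  · obtain ⟨l, rfl⟩ := Fin.exists_succAbove_eq hk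
    simp only [Fin.tail, ← Fin.succ_succAbove_succ, Fin.insertNth_apply_succAbove]

variable (S : TopCat) (F : (Over S)ᵒᵖ ⥤ AddCommGrpCat)

lemma map_map {A B C : Over S} (a : A ⟶ B) (b : B ⟶ C) (x : F.obj (op C)) :
    F.map a.op (F.map b.op x) = F.map (a ≫ b).op x := by
  rw [op_comp, F.map_comp]; rfl

lemma diff_apply {A : TopCat} (hA : A ⟶ S) (n : ℕ) (x : ob S F hA (n + 1)) :
    diff S F hA n x = ∑ i : Fin (n + 1), ((-1 : ℤ) ^ ((i : ℕ) + 1)) •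
      (F.map (face S hA n i 0).op x - F.map (face S hA n i 1).op x) := by
  simp only [diff, AddMonoidHom.finset_sum_apply]
  exact Finset.sum_congr rfl fun i _ => rfl


lemma face_cubeMap {A B : TopCat} (hA : A ⟶ S) (hB : B ⟶ S) (f : C(A, B))
    (hf : ∀ x, hB (f x) = hA x) (n : ℕ) (i : Fin (n + 1)) (ε : unitInterval) :
    face S hA n i ε ≫ cubeMap S hA hB f hf (n + 1) =
      cubeMap S hA hB f hf n ≫ face S hB n i ε := by
  apply CategoryTheory.Over.OverMorphism.ext
  simp only [Over.comp_left]
  apply TopCat.ext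
  intro p
  rfl

lemma cubeMap_comp {A B C : TopCat} (hA : A ⟶ S) (hB : B ⟶ S) (hC : C ⟶ S)
    (f : C(A, B)) (hf : ∀ x, hB (f x) = hA x) (g : C(B, C)) (hg : ∀ x, hC (g x) = hB x)
    (n : ℕ) :
    cubeMap S hA hB f hf n ≫ cubeMap S hB hC g hg n =
      cubeMap S hA hC (g.comp f) (fun x => (hg (f x)).trans (hf x)) n := by
  apply CategoryTheory.Over.OverMorphism.ext
  simp only [Over.comp_left]
  apply TopCat.ext
  intro p
  rfl

lemma cubeMap_id {A : TopCat} (hA : A ⟶ S) (n : ℕ) :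
    cubeMap S hA hA (ContinuousMap.id A) (fun _ => rfl) n = 𝟙 (cubeOver S hA n) := by
  apply CategoryTheory.Over.OverMorphism.ext
  apply TopCat.ext
  intro p
  rfl


lemma insertNth_zero_zero {n : ℕ} {α : Type*} (ε : α) (u : Fin n → α) :
    Fin.insertNth (α := fun _ => α) 0 ε u 0 = ε :=
  Fin.insertNth_apply_same (α := fun _ => α) 0 ε u

lemma tail_insertNth_zero {n : ℕ} {α : Type*} (ε : α) (u : Fin n → α) :
    Fin.tail (α := fun _ => α) (Fin.insertNth (α := fun _ => α) 0 ε u) = u := by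
  funext j
  show Fin.insertNth (α := fun _ => α) 0 ε u j.succ = u j
  rw [← Fin.zero_succAbove, Fin.insertNth_apply_succAbove]

section Homotopy

variable {A B : TopCat} {hA : A ⟶ S} {hB : B ⟶ S}
  (h : C(↥A × unitInterval, ↥B)) (hhS : ∀ p : ↥A × unitInterval, hB (h p) = hA p.1)

/-- The prism operator `X × [0,1]ⁿ⁺¹ → Y × [0,1]ⁿ`, `(x, u) ↦ (h (x, u 0), tail u)`. -/
def prism (n : ℕ) : cubeOver S hA (n + 1) ⟶ cubeOver S hB n :=
  Over.homMk
    (TopCat.ofHom ⟨fun p => (h (p.1, p.2 0), Fin.tail p.2),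
      ((h.continuous.comp (continuous_fst.prodMk
        ((continuous_apply (0 : Fin (n + 1))).comp continuous_snd))).prodMk
        (continuous_pi fun j => (continuous_apply j.succ).comp continuous_snd))⟩)
    (by ext p; exact hhS (p.1, p.2 0))

lemma face_zero_prism (n : ℕ) (ε : unitInterval) (e : C(↥A, ↥B))
    (he : ∀ x, hB (e x) = hA x) (hε : ∀ a, h (a, ε) = e a) :
    face S hA n 0 ε ≫ prism S h hhS n = cubeMap S hA hB e he n := by
  apply CategoryTheory.Over.OverMorphism.ext
  simp only [Over.comp_left]
  apply TopCat.ext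
  intro p
  show (h (p.1, Fin.insertNth (α := fun _ => unitInterval) 0 ε p.2 0),
      Fin.tail (α := fun _ => unitInterval)
        (Fin.insertNth (α := fun _ => unitInterval) 0 ε p.2)) = (e p.1, p.2)
  rw [insertNth_zero_zero, tail_insertNth_zero, hε]

lemma face_succ_prism (n : ℕ) (j : Fin (n + 1)) (ε : unitInterval) :
    face S hA (n + 1) j.succ ε ≫ prism S h hhS (n + 1) =
      prism S h hhS n ≫ face S hB n j ε := by
  apply CategoryTheory.Over.OverMorphism.ext
  simp only [Over.comp_left]
  apply TopCat.ext
  intro p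
  show (h (p.1, Fin.insertNth (α := fun _ => unitInterval) j.succ ε p.2 0),
      Fin.tail (α := fun _ => unitInterval)
        (Fin.insertNth (α := fun _ => unitInterval) j.succ ε p.2)) =
    (h (p.1, p.2 0), Fin.insertNth (α := fun _ => unitInterval) j ε
      (Fin.tail (α := fun _ => unitInterval) p.2))
  rw [tail_insertNth]
  congr 2


variable (F : (Over S)ᵒᵖ ⥤ AddCommGrpCat)
variable (f₀ f₁ : C(↥A, ↥B)) (h₀ : ∀ x, hB (f₀ x) = hA x) (h₁ : ∀ x, hB (f₁ x) = hA x)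

lemma key_zero (hh0 : ∀ a, h (a, 0) = f₀ a) (hh1 : ∀ a, h (a, 1) = f₁ a)
    (x : ob S F hB 0) :
    diff S F hA 0 (F.map (prism S h hhS 0).op x) =
      indMap S F hA hB f₁ h₁ 0 x - indMap S F hA hB f₀ h₀ 0 x := by
  rw [diff_apply, Fin.sum_univ_one]
  rw [map_map, map_map, face_zero_prism S h hhS 0 0 f₀ h₀ hh0,
    face_zero_prism S h hhS 0 1 f₁ h₁ hh1]
  show (-1 : ℤ) ^ (0 + 1) • (indMap S F hA hB f₀ h₀ 0 x - indMap S F hA hB f₁ h₁ 0 x) = _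
  rw [pow_one, neg_one_zsmul, neg_sub]

lemma key_succ (hh0 : ∀ a, h (a, 0) = f₀ a) (hh1 : ∀ a, h (a, 1) = f₁ a)
    (n : ℕ) (x : ob S F hB (n + 1)) :
    diff S F hA (n + 1) (F.map (prism S h hhS (n + 1)).op x) =
      indMap S F hA hB f₁ h₁ (n + 1) x - indMap S F hA hB f₀ h₀ (n + 1) x -
        F.map (prism S h hhS n).op (diff S F hB n x) := by
  rw [diff_apply, Fin.sum_univ_succ]
  rw [map_map, map_map, face_zero_prism S h hhS (n + 1) 0 f₀ h₀ hh0,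
    face_zero_prism S h hhS (n + 1) 1 f₁ h₁ hh1]
  have ts : ∀ (j : Fin (n + 1)) (ε : unitInterval),
      F.map (face S hA (n + 1) j.succ ε).op (F.map (prism S h hhS (n + 1)).op x) =
        F.map (prism S h hhS n).op (F.map (face S hB n j ε).op x) := by
    intro j ε
    rw [map_map, map_map, face_succ_prism]
  simp only [ts]
  rw [diff_apply, map_sum]
  simp only [map_zsmul, map_sub]
  have sgn : ∀ (j : Fin (n + 1)) (c : ob S F hA (n + 1)),
      ((-1 : ℤ) ^ (((j.succ : Fin (n + 2)) : ℕ) + 1)) • c =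
        -(((-1 : ℤ) ^ ((j : ℕ) + 1)) • c) := by
    intro j c
    rw [Fin.val_succ, pow_succ, mul_neg_one, neg_smul]
  simp only [sgn]
  rw [Finset.sum_neg_distrib]
  show (-1 : ℤ) ^ (((0 : Fin (n + 2)) : ℕ) + 1) •
      (indMap S F hA hB f₀ h₀ (n + 1) x - indMap S F hA hB f₁ h₁ (n + 1) x) + _ = _
  rw [Fin.val_zero, pow_one, neg_one_zsmul, neg_sub]
  abel

end Homotopy

section Main

variable (F : (Over S)ᵒᵖ ⥤ AddCommGrpCat)

lemma partI {A B : TopCat} (hA : A ⟶ S) (hB : B ⟶ S) (f₀ f₁ : C(↥A, ↥B))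
    (h₀ : ∀ x, hB (f₀ x) = hA x) (h₁ : ∀ x, hB (f₁ x) = hA x)
    (htp : HtpOver S hA hB f₀ f₁) (n : ℕ) (x : ob S F hB n)
    (hx : IsCycle S F hB n x) :
    IsBoundary S F hA n (indMap S F hA hB f₀ h₀ n x - indMap S F hA hB f₁ h₁ n x) := by
  obtain ⟨h, hhS, hh0, hh1⟩ := htp
  cases n with
  | zero =>
    refine ⟨-(F.map (prism S h hhS 0).op x), ?_⟩
    rw [map_neg, key_zero S h hhS F f₀ f₁ h₀ h₁ hh0 hh1 x, neg_sub]
  | succ m =>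
    refine ⟨-(F.map (prism S h hhS (m + 1)).op x), ?_⟩
    have hx' : diff S F hB m x = 0 := hx
    rw [map_neg, key_succ S h hhS F f₀ f₁ h₀ h₁ hh0 hh1 m x, hx', map_zero, sub_zero,
      neg_sub]

lemma chainComm {A B : TopCat} (hA : A ⟶ S) (hB : B ⟶ S) (f : C(↥A, ↥B))
    (hf : ∀ x, hB (f x) = hA x) (n : ℕ) :
    (diff S F hA n).comp (indMap S F hA hB f hf (n + 1)) =
      (indMap S F hA hB f hf n).comp (diff S F hB n) := by
  apply AddMonoidHom.ext
  intro x
  simp only [AddMonoidHom.comp_apply]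
  rw [diff_apply, diff_apply]
  simp only [indMap, map_sum, map_zsmul, map_sub]
  refine Finset.sum_congr rfl fun i _ => ?_
  congr 1
  congr 1 <;>
  · rw [map_map, map_map, face_cubeMap]

lemma chainComm_apply {A B : TopCat} (hA : A ⟶ S) (hB : B ⟶ S) (f : C(↥A, ↥B))
    (hf : ∀ x, hB (f x) = hA x) (n : ℕ) (x : ob S F hB (n + 1)) :
    diff S F hA n (indMap S F hA hB f hf (n + 1) x) =
      indMap S F hA hB f hf n (diff S F hB n x) :=
  DFunLike.congr_fun (chainComm S F hA hB f hf n) x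

lemma indMap_comp_apply {A B C : TopCat} (hA : A ⟶ S) (hB : B ⟶ S) (hC : C ⟶ S)
    (f : C(↥A, ↥B)) (hf : ∀ x, hB (f x) = hA x) (g : C(↥B, ↥C))
    (hg : ∀ x, hC (g x) = hB x) (hgf : ∀ x, hC (g (f x)) = hA x) (n : ℕ)
    (x : ob S F hC n) :
    indMap S F hA hB f hf n (indMap S F hB hC g hg n x) =
      indMap S F hA hC (g.comp f) hgf n x := by
  simp only [indMap]
  rw [map_map, cubeMap_comp]

lemma indMap_id_apply {A : TopCat} (hA : A ⟶ S) (hid : ∀ x, hA (ContinuousMap.id A x) = hA x)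
    (n : ℕ) (x : ob S F hA n) :
    indMap S F hA hA (ContinuousMap.id A) hid n x = x := by
  simp only [indMap]
  rw [show cubeMap S hA hA (ContinuousMap.id A) hid n = 𝟙 (cubeOver S hA n) from
    cubeMap_id S hA n]
  simp

end Main

end Aux10

open Stmt10 in
/-- Relative homotopy invariance of the cubical complex of a presheaf of abelian groups on
`Top/S`: maps over `S` which are homotopic over `S` induce the same map on homology of the
relative cubical complexes; consequently a homotopy equivalence over `S` induces a
quasi-isomorphism. -/
theorem stmt10 (S X Y : TopCat) (hX : X ⟶ S) (hY : Y ⟶ S) (F : (Over S)ᵒᵖ ⥤ AddCommGrpCat) :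
    -- homotopic maps over S induce the same map on homology
    (∀ (f₀ f₁ : C(X, Y)) (h₀ : ∀ x, hY (f₀ x) = hX x) (h₁ : ∀ x, hY (f₁ x) = hX x),
        HtpOver S hX hY f₀ f₁ →
        ∀ (n : ℕ) (x : ob S F hY n), IsCycle S F hY n x →
          IsBoundary S F hX n
            (indMap S F hX hY f₀ h₀ n x - indMap S F hX hY f₁ h₁ n x)) ∧
    -- a homotopy equivalence over S induces a quasi-isomorphism
    (∀ (f : C(X, Y)) (hf : ∀ x, hY (f x) = hX x),
        (∃ (g : C(Y, X)) (_ : ∀ y, hX (g y) = hY y),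
          HtpOver S hX hX (g.comp f) (ContinuousMap.id X) ∧
          HtpOver S hY hY (f.comp g) (ContinuousMap.id Y)) →
        ((∀ n : ℕ, (diff S F hX n).comp (indMap S F hX hY f hf (n + 1)) =
            (indMap S F hX hY f hf n).comp (diff S F hY n)) ∧
         (∀ (n : ℕ) (x : ob S F hX n), IsCycle S F hX n x →
            ∃ y : ob S F hY n, IsCycle S F hY n y ∧
              IsBoundary S F hX n (x - indMap S F hX hY f hf n y)) ∧
         (∀ (n : ℕ) (y : ob S F hY n), IsCycle S F hY n y →
            IsBoundary S F hX n (indMap S F hX hY f hf n y) → IsBoundary S F hY n y))) := by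
  constructor
  · exact fun f₀ f₁ h₀ h₁ htp n x hx =>
      Aux10.partI S F hX hY f₀ f₁ h₀ h₁ htp n x hx
  · rintro f hf ⟨g, hg, hgf, hfg⟩
    have hGF : ∀ x, hX ((g.comp f) x) = hX x := fun x => (hg (f x)).trans (hf x)
    have hFG : ∀ y, hY ((f.comp g) y) = hY y := fun y => (hf (g y)).trans (hg y)
    refine ⟨fun n => Aux10.chainComm S F hX hY f hf n, ?_, ?_⟩
    · intro n x hx
      refine ⟨indMap S F hY hX g hg n x, ?_, ?_⟩
      · cases n with
        | zero => trivial
        | succ m =>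
          show diff S F hY m (indMap S F hY hX g hg (m + 1) x) = 0
          rw [Aux10.chainComm_apply S F hY hX g hg m x,
            show diff S F hX m x = 0 from hx, map_zero]
      · rw [Aux10.indMap_comp_apply S F hX hY hX f hf g hg hGF n x]
        obtain ⟨w, hw⟩ := Aux10.partI S F hX hX (g.comp f) (ContinuousMap.id X) hGF
          (fun _ => rfl) hgf n x hx
        refine ⟨-w, ?_⟩
        rw [map_neg, hw, Aux10.indMap_id_apply S F hX (fun _ => rfl) n x, neg_sub]
    · rintro n y hy ⟨z, hz⟩
      obtain ⟨w, hw⟩ := Aux10.partI S F hY hY (f.comp g) (ContinuousMap.id Y)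
        hFG (fun _ => rfl) hfg n y hy
      refine ⟨indMap S F hY hX g hg (n + 1) z - w, ?_⟩
      rw [map_sub, hw, Aux10.chainComm_apply S F hY hX g hg n z, hz,
        Aux10.indMap_comp_apply S F hY hX hY g hg f hf hFG n y,
        Aux10.indMap_id_apply S F hY (fun _ => rfl) n y]
      abel
end
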